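/- arXiv:math/0702004 — 4 statements merged into one kernel-verified Lean document; each statement's English description precedes it below -/
import Mathlib

section
/- Let A be an algebra of measurable subsets of [0,1] containing [0,1], and define ‖W‖_{A,□} = sup over S,T ∈ A of |∫_{S×T} W|. For every graphon W and every ε > 0, there exists a partition P of [0,1] into at most 4^{⌈1/ε²⌉−1} sets belonging to A such that ‖W − W_P‖_{A,□} ≤ ε·‖W‖_2. -/
open MeasureTheory
open scoped Function

/-- `V : ι → Set ℝ` is a partition of `[0,1]`. -/
def IsPartition {ι : Type*} (V : ι → Set ℝ) : Prop :=
  (∀ i, MeasurableSet (V i)) ∧ Pairwise (fun i j => Disjoint (V i) (V j)) ∧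
    (⋃ i, V i) = Set.Icc (0:ℝ) 1

/-- The stepping `W_P` of a kernel `W` on a finite partition `V`. -/
noncomputable def stepW {ι : Type*} [Fintype ι] (V : ι → Set ℝ) (W : ℝ → ℝ → ℝ)
    (x y : ℝ) : ℝ :=
  ∑ i, ∑ j,
    Set.indicator (V i) (fun _ => (1:ℝ)) x * Set.indicator (V j) (fun _ => (1:ℝ)) y *
      ((∫ u in V i, ∫ v in V j, W u v) /
        (MeasureTheory.volume (V i)).toReal / (MeasureTheory.volume (V j)).toReal)

/-- `𝒜` is an algebra of measurable subsets of `[0,1]`. -/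
structure SetAlgebra (𝒜 : Set (Set ℝ)) : Prop where
  subset_Icc : ∀ S ∈ 𝒜, S ⊆ Set.Icc (0:ℝ) 1
  measurable : ∀ S ∈ 𝒜, MeasurableSet S
  univ_mem : Set.Icc (0:ℝ) 1 ∈ 𝒜
  compl_mem : ∀ S ∈ 𝒜, Set.Icc (0:ℝ) 1 \ S ∈ 𝒜
  union_mem : ∀ S ∈ 𝒜, ∀ T ∈ 𝒜, S ∪ T ∈ 𝒜
  inter_mem : ∀ S ∈ 𝒜, ∀ T ∈ 𝒜, S ∩ T ∈ 𝒜

/-- The cut norm restricted to sets of the algebra `𝒜`: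
`‖W‖_{𝒜,□} = sup_{S,T ∈ 𝒜} |∫_{S×T} W|`. -/
noncomputable def cutNormA (𝒜 : Set (Set ℝ)) (W : ℝ → ℝ → ℝ) : ℝ :=
  sSup {r : ℝ | ∃ S ∈ 𝒜, ∃ T ∈ 𝒜, r = |∫ x in S, ∫ y in T, W x y|}

/-- The `L²` norm of a kernel on `[0,1]²`. -/
noncomputable def L2Norm (W : ℝ → ℝ → ℝ) : ℝ :=
  Real.sqrt (∫ x in Set.Icc (0:ℝ) 1, ∫ y in Set.Icc (0:ℝ) 1, (W x y) ^ 2)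

namespace WeakReg

variable {f : ℝ → ℝ → ℝ} {C : ℝ}

lemma meas_inner (hf : Measurable (Function.uncurry f)) (B : Set ℝ) :
    Measurable fun x => ∫ y in B, f x y :=
  (hf.stronglyMeasurable.integral_prod_right' (ν := volume.restrict B)).measurable

lemma intOn (hf : Measurable (Function.uncurry f)) (hC : ∀ x y, |f x y| ≤ C)
    {B : Set ℝ} (hB : volume B ≠ ⊤) (x : ℝ) :
    IntegrableOn (f x) B volume :=
  Measure.integrableOn_of_bounded hB (hf.of_uncurry_left).aestronglyMeasurable
    (ae_of_all _ fun y => by simpa [Real.norm_eq_abs] using hC x y)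

lemma inner_bound (hC : ∀ x y, |f x y| ≤ C)
    {B : Set ℝ} (hB : volume B ≠ ⊤) (x : ℝ) :
    |∫ y in B, f x y| ≤ C * (volume B).toReal := by
  calc |∫ y in B, f x y| = ‖∫ y in B, f x y‖ := (Real.norm_eq_abs _).symm
    _ ≤ C * (volume B).toReal := by
        exact norm_setIntegral_le_of_norm_le_const_ae (lt_top_iff_ne_top.2 hB)
          (ae_of_all _ fun y => by simpa [Real.norm_eq_abs] using hC x y)

lemma intOn_outer (hf : Measurable (Function.uncurry f)) (hC : ∀ x y, |f x y| ≤ C)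
    {A B : Set ℝ} (hA : volume A ≠ ⊤) (hB : volume B ≠ ⊤) :
    IntegrableOn (fun x => ∫ y in B, f x y) A volume :=
  Measure.integrableOn_of_bounded hA (meas_inner hf B).aestronglyMeasurable
    (ae_of_all _ fun x => by
      simpa [Real.norm_eq_abs] using inner_bound hC hB x)

/-- Block decomposition of a double set integral over finite disjoint unions. -/
lemma blocky {ι : Type} [Fintype ι] (hf : Measurable (Function.uncurry f))
    (hC : ∀ x y, |f x y| ≤ C)
    (Q : ι → Set ℝ) (hQm : ∀ a, MeasurableSet (Q a)) (hQd : Pairwise (Disjoint on Q))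
    (hQf : ∀ a, volume (Q a) ≠ ⊤) (σ τ : Finset ι) :
    ∫ x in ⋃ a ∈ σ, Q a, ∫ y in ⋃ b ∈ τ, Q b, f x y
      = ∑ a ∈ σ, ∑ b ∈ τ, ∫ x in Q a, ∫ y in Q b, f x y := by
  have hσfin : volume (⋃ a ∈ σ, Q a) ≠ ⊤ := by
    refine ne_top_of_le_ne_top ?_ (measure_biUnion_finset_le σ Q)
    exact ENNReal.sum_ne_top.2 fun a _ => hQf a
  have hinner : ∀ x, ∫ y in ⋃ b ∈ τ, Q b, f x y = ∑ b ∈ τ, ∫ y in Q b, f x y := by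
    intro x
    exact integral_biUnion_finset τ (fun b _ => hQm b)
      ((hQd.set_pairwise _).mono' (fun _ _ h => h))
      (fun b _ => intOn hf hC (hQf b) x)
  calc ∫ x in ⋃ a ∈ σ, Q a, ∫ y in ⋃ b ∈ τ, Q b, f x y
      = ∫ x in ⋃ a ∈ σ, Q a, ∑ b ∈ τ, ∫ y in Q b, f x y := by
        simp_rw [hinner]
    _ = ∑ b ∈ τ, ∫ x in ⋃ a ∈ σ, Q a, ∫ y in Q b, f x y := by
        apply integral_finset_sum
        intro b _
        exact (intOn_outer hf hC hσfin (hQf b))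
    _ = ∑ b ∈ τ, ∑ a ∈ σ, ∫ x in Q a, ∫ y in Q b, f x y := by
        refine Finset.sum_congr rfl fun b _ => ?_
        exact integral_biUnion_finset σ (fun a _ => hQm a)
          ((hQd.set_pairwise _).mono' (fun _ _ h => h))
          (fun a _ => intOn_outer hf hC (hQf a) (hQf b))
    _ = ∑ a ∈ σ, ∑ b ∈ τ, ∫ x in Q a, ∫ y in Q b, f x y := Finset.sum_comm

/-- `w A * w B * avg = II` in all cases. -/
lemma II_eq (f : ℝ → ℝ → ℝ) {A B : Set ℝ} (hA : volume A ≠ ⊤) (hB : volume B ≠ ⊤) :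
    (volume A).toReal * (volume B).toReal *
      ((∫ x in A, ∫ y in B, f x y) / (volume A).toReal / (volume B).toReal)
      = ∫ x in A, ∫ y in B, f x y := by
  by_cases hA0 : (volume A).toReal = 0
  · have : volume A = 0 := by
      rcases (ENNReal.toReal_eq_zero_iff _).1 hA0 with h | h
      · exact h
      · exact absurd h hA
    rw [hA0]
    simp [Measure.restrict_eq_zero.2 this]
  by_cases hB0 : (volume B).toReal = 0
  · have : volume B = 0 := by
      rcases (ENNReal.toReal_eq_zero_iff _).1 hB0 with h | h
      · exact h
      · exact absurd h hB
    rw [hB0]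
    simp [Measure.restrict_eq_zero.2 this]
  field_simp

/-- Cauchy–Schwarz: `(∫ f)^2 ≤ μ(univ) ∫ f²` for a finite measure. -/
lemma sq_integral_le {α : Type} [MeasurableSpace α] (μ : Measure α) [IsFiniteMeasure μ]
    {g : α → ℝ} (hg : Integrable g μ) (hg2 : Integrable (fun x => g x ^ 2) μ) :
    (∫ x, g x ∂μ) ^ 2 ≤ (μ Set.univ).toReal * ∫ x, g x ^ 2 ∂μ := by
  set m := (μ Set.univ).toReal with hm
  set I := ∫ x, g x ∂μ with hI
  have hm0 : 0 ≤ m := ENNReal.toReal_nonneg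
  rcases eq_or_lt_of_le hm0 with hm0' | hm0'
  · have : μ = 0 := by
      have := (ENNReal.toReal_eq_zero_iff _).1 hm0'.symm
      rcases this with h | h
      · exact Measure.measure_univ_eq_zero.1 h
      · exact absurd h (measure_ne_top μ _)
    simp [hI, this]
  · have key : 0 ≤ ∫ x, (g x - I / m) ^ 2 ∂μ :=
      integral_nonneg fun x => sq_nonneg _
    have expand : ∫ x, (g x - I / m) ^ 2 ∂μ
        = (∫ x, g x ^ 2 ∂μ) - 2 * (I / m) * I + (I / m) ^ 2 * m := by
      have h1 : ∀ x, (g x - I / m) ^ 2 = g x ^ 2 - 2 * (I / m) * g x + (I / m) ^ 2 := by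
        intro x; ring
      simp_rw [h1]
      rw [integral_add, integral_sub hg2 ((hg.const_mul _)), integral_const_mul,
        integral_const]
      · simp [smul_eq_mul, hm, mul_comm]; rfl
      · exact (hg2.sub (hg.const_mul _))
      · exact integrable_const _
    rw [expand] at key
    have h2 : (I / m) ^ 2 * m = I ^ 2 / m := by
      field_simp
    have h3 : 2 * (I / m) * I = 2 * I ^ 2 / m := by
      field_simp
    rw [h2, h3] at key
    have hsplit : 2 * I ^ 2 / m = 2 * (I ^ 2 / m) := by ring
    rw [hsplit] at key
    have : I ^ 2 / m ≤ ∫ x, g x ^ 2 ∂μ := by linarith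
    calc I ^ 2 = (I ^ 2 / m) * m := by field_simp
      _ ≤ (∫ x, g x ^ 2 ∂μ) * m := by
          apply mul_le_mul_of_nonneg_right this hm0
      _ = m * ∫ x, g x ^ 2 ∂μ := mul_comm _ _

lemma sq_II_le (hf : Measurable (Function.uncurry f)) (hC : ∀ x y, |f x y| ≤ C)
    {A B : Set ℝ} (hA : volume A ≠ ⊤) (hB : volume B ≠ ⊤) :
    (∫ x in A, ∫ y in B, f x y) ^ 2
      ≤ (volume A).toReal * (volume B).toReal * ∫ x in A, ∫ y in B, (f x y) ^ 2 := by
  haveI h1 : IsFiniteMeasure (volume.restrict A) :=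
    ⟨by rw [Measure.restrict_apply_univ]; exact lt_top_iff_ne_top.2 hA⟩
  haveI h2 : IsFiniteMeasure (volume.restrict B) :=
    ⟨by rw [Measure.restrict_apply_univ]; exact lt_top_iff_ne_top.2 hB⟩
  set μ := (volume.restrict A).prod (volume.restrict B) with hμ
  have hint : Integrable (Function.uncurry f) μ := by
    refine Integrable.mono' (integrable_const C) hf.aestronglyMeasurable ?_
    exact ae_of_all _ fun p => by
      simpa [Real.norm_eq_abs, Function.uncurry] using hC p.1 p.2
  have hint2 : Integrable (Function.uncurry fun x y => (f x y) ^ 2) μ := by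
    refine Integrable.mono' (integrable_const (C ^ 2)) ?_ ?_
    · exact ((hf.pow_const 2)).aestronglyMeasurable
    · refine ae_of_all _ fun p => ?_
      have h := hC p.1 p.2
      simp only [Function.uncurry, Real.norm_eq_abs, abs_pow]
      nlinarith [abs_nonneg (f p.1 p.2)]
  have hII : ∫ x in A, ∫ y in B, f x y = ∫ z, Function.uncurry f z ∂μ :=
    integral_integral hint
  have hII2 : ∫ x in A, ∫ y in B, (f x y) ^ 2
      = ∫ z, (Function.uncurry f z) ^ 2 ∂μ := by
    have := integral_integral (f := fun x y => (f x y) ^ 2) hint2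
    simpa [Function.uncurry] using this
  rw [hII, hII2]
  have hμuniv : (μ Set.univ).toReal = (volume A).toReal * (volume B).toReal := by
    rw [hμ, ← Set.univ_prod_univ, Measure.prod_prod, Measure.restrict_apply_univ,
      Measure.restrict_apply_univ, ENNReal.toReal_mul]
  rw [← hμuniv]
  exact sq_integral_le μ hint hint2

/-- average of `f` over `A × B` (with junk value 0 when a set is null). -/
noncomputable def avg (f : ℝ → ℝ → ℝ) (A B : Set ℝ) : ℝ :=
  (∫ x in A, ∫ y in B, f x y) / (MeasureTheory.volume A).toReal /
    (MeasureTheory.volume B).toReal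

lemma step_eq {ι : Type} [Fintype ι] {V : ι → Set ℝ} (W : ℝ → ℝ → ℝ)
    (hd : Pairwise (Disjoint on V)) {i j : ι} {x y : ℝ}
    (hx : x ∈ V i) (hy : y ∈ V j) : stepW V W x y = avg W (V i) (V j) := by
  unfold stepW
  rw [Finset.sum_eq_single i]
  · rw [Finset.sum_eq_single j]
    · rw [Set.indicator_of_mem hx, Set.indicator_of_mem hy]
      simp [avg]
    · intro b _ hb
      have hyb : y ∉ V b := fun hyb => (hd hb).ne_of_mem hyb hy rfl
      simp [Set.indicator_of_notMem hyb]
    · intro h; exact absurd (Finset.mem_univ j) h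
  · intro a _ ha
    have hxa : x ∉ V a := fun hxa => (hd ha).ne_of_mem hxa hx rfl
    simp [Set.indicator_of_notMem hxa]
  · intro h; exact absurd (Finset.mem_univ i) h

lemma step_measurable {ι : Type} [Fintype ι] {V : ι → Set ℝ}
    (hm : ∀ i, MeasurableSet (V i)) (W : ℝ → ℝ → ℝ) :
    Measurable (Function.uncurry (stepW V W)) := by
  have : Function.uncurry (stepW V W) = fun p : ℝ × ℝ => ∑ i, ∑ j,
      Set.indicator (V i) (fun _ => (1:ℝ)) p.1 * Set.indicator (V j) (fun _ => (1:ℝ)) p.2 *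
        ((∫ u in V i, ∫ v in V j, W u v) /
          (MeasureTheory.volume (V i)).toReal / (MeasureTheory.volume (V j)).toReal) := rfl
  rw [this]
  apply Finset.measurable_sum
  intro i _
  apply Finset.measurable_sum
  intro j _
  exact ((((measurable_const.indicator (hm i)).comp measurable_fst).mul
    ((measurable_const.indicator (hm j)).comp measurable_snd)).mul_const _)

lemma indicator_one_abs_le (A : Set ℝ) (x : ℝ) :
    |Set.indicator A (fun _ => (1:ℝ)) x| ≤ 1 := by
  by_cases h : x ∈ A
  · rw [Set.indicator_of_mem h]; simp
  · rw [Set.indicator_of_notMem h]; simp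

lemma step_abs_le {ι : Type} [Fintype ι] (V : ι → Set ℝ) (W : ℝ → ℝ → ℝ) (x y : ℝ) :
    |stepW V W x y| ≤ ∑ i, ∑ j, |avg W (V i) (V j)| := by
  unfold stepW avg
  refine (Finset.abs_sum_le_sum_abs _ _).trans (Finset.sum_le_sum fun i _ => ?_)
  refine (Finset.abs_sum_le_sum_abs _ _).trans (Finset.sum_le_sum fun j _ => ?_)
  rw [abs_mul, abs_mul]
  have hab : |Set.indicator (V i) (fun _ => (1:ℝ)) x| *
      |Set.indicator (V j) (fun _ => (1:ℝ)) y| ≤ 1 :=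
    mul_le_one₀ (indicator_one_abs_le _ _) (abs_nonneg _) (indicator_one_abs_le _ _)
  exact mul_le_of_le_one_left (abs_nonneg _) hab

/-- Parallel-axis / Pythagoras identity for weighted finite sums. -/
lemma parallel_axis {κ : Type} (A B : Finset κ) (wf : κ → ℝ) (t : κ → κ → ℝ)
    (wi wj T : ℝ)
    (hwi : ∑ a ∈ A, wf a = wi) (hwj : ∑ b ∈ B, wf b = wj)
    (hT : ∑ a ∈ A, ∑ b ∈ B, wf a * wf b * t a b = wi * wj * T) :
    ∑ a ∈ A, ∑ b ∈ B, wf a * wf b * (t a b - T) ^ 2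
      = (∑ a ∈ A, ∑ b ∈ B, wf a * wf b * (t a b) ^ 2) - wi * wj * T ^ 2 := by
  have expand : ∀ a b, wf a * wf b * (t a b - T) ^ 2
      = wf a * wf b * t a b ^ 2 - 2 * T * (wf a * wf b * t a b)
        + T ^ 2 * (wf a * wf b) := by intro a b; ring
  have hZ : ∑ a ∈ A, ∑ b ∈ B, wf a * wf b = wi * wj := by
    rw [← hwi, ← hwj, Finset.sum_mul_sum]
  calc ∑ a ∈ A, ∑ b ∈ B, wf a * wf b * (t a b - T) ^ 2
      = ∑ a ∈ A, ∑ b ∈ B, (wf a * wf b * t a b ^ 2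
          - 2 * T * (wf a * wf b * t a b) + T ^ 2 * (wf a * wf b)) := by
        refine Finset.sum_congr rfl fun a _ => Finset.sum_congr rfl fun b _ => expand a b
    _ = (∑ a ∈ A, ∑ b ∈ B, wf a * wf b * t a b ^ 2)
          - 2 * T * (∑ a ∈ A, ∑ b ∈ B, wf a * wf b * t a b)
          + T ^ 2 * (∑ a ∈ A, ∑ b ∈ B, wf a * wf b) := by
        simp only [Finset.sum_add_distrib, Finset.sum_sub_distrib, Finset.mul_sum]
    _ = (∑ a ∈ A, ∑ b ∈ B, wf a * wf b * t a b ^ 2) - wi * wj * T ^ 2 := by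
        rw [hT, hZ]; ring

section Partition

variable (W : ℝ → ℝ → ℝ)
variable {ι : Type} [Fintype ι] {V : ι → Set ℝ}

/-- The energy of a partition. -/
noncomputable def energy (V : ι → Set ℝ) : ℝ :=
  ∑ i, ∑ j, (volume (V i)).toReal * (volume (V j)).toReal * (avg W (V i) (V j)) ^ 2

variable {W}

lemma energy_nonneg : 0 ≤ energy W V :=
  Finset.sum_nonneg fun i _ => Finset.sum_nonneg fun j _ => by positivity

lemma part_subset (hVu : ⋃ i, V i = Set.Icc (0:ℝ) 1) (i : ι) : V i ⊆ Set.Icc (0:ℝ) 1 :=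
  hVu ▸ Set.subset_iUnion V i

lemma Icc_vol_ne_top : volume (Set.Icc (0:ℝ) 1) ≠ ⊤ := by
  rw [Real.volume_Icc]; exact ENNReal.ofReal_ne_top

lemma Icc_vol_toReal : (volume (Set.Icc (0:ℝ) 1)).toReal = 1 := by
  rw [Real.volume_Icc]; norm_num

lemma part_vol_ne_top (hVu : ⋃ i, V i = Set.Icc (0:ℝ) 1) (i : ι) : volume (V i) ≠ ⊤ :=
  ne_top_of_le_ne_top Icc_vol_ne_top (measure_mono (part_subset hVu i))

lemma part_wsum (hVm : ∀ i, MeasurableSet (V i)) (hVd : Pairwise (Disjoint on V))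
    (hVu : ⋃ i, V i = Set.Icc (0:ℝ) 1) :
    ∑ i, (volume (V i)).toReal = 1 := by
  have h1 : ⋃ i ∈ (Finset.univ : Finset ι), V i = Set.Icc (0:ℝ) 1 := by
    simpa using hVu
  have h2 : volume (⋃ i ∈ (Finset.univ : Finset ι), V i) = ∑ i, volume (V i) :=
    measure_biUnion_finset ((hVd.set_pairwise _).mono' fun _ _ h => h)
      (fun i _ => hVm i)
  rw [h1] at h2
  have := congrArg ENNReal.toReal h2
  rw [Icc_vol_toReal] at this
  rw [ENNReal.toReal_sum fun i _ => part_vol_ne_top hVu i] at this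
  exact this.symm

/-- The energy is at most the (squared) L² norm. -/
lemma energy_le (hW : Measurable (Function.uncurry W)) {C : ℝ} (hC : ∀ x y, |W x y| ≤ C)
    (hVm : ∀ i, MeasurableSet (V i)) (hVd : Pairwise (Disjoint on V))
    (hVu : ⋃ i, V i = Set.Icc (0:ℝ) 1) :
    energy W V ≤ ∫ x in Set.Icc (0:ℝ) 1, ∫ y in Set.Icc (0:ℝ) 1, (W x y) ^ 2 := by
  have hsq : Measurable (Function.uncurry fun x y => (W x y) ^ 2) := by
    have : (Function.uncurry fun x y => (W x y) ^ 2)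
        = fun p => (Function.uncurry W p) ^ 2 := rfl
    rw [this]; exact hW.pow_const 2
  have hCsq : ∀ x y, |(W x y) ^ 2| ≤ C ^ 2 := by
    intro x y
    rw [abs_pow]
    have := hC x y
    nlinarith [abs_nonneg (W x y)]
  have hIcc : ⋃ a ∈ (Finset.univ : Finset ι), V a = Set.Icc (0:ℝ) 1 := by simpa using hVu
  rw [← hIcc, blocky hsq hCsq V hVm hVd (part_vol_ne_top hVu) Finset.univ Finset.univ]
  refine Finset.sum_le_sum fun i _ => Finset.sum_le_sum fun j _ => ?_
  set wi := (volume (V i)).toReal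
  set wj := (volume (V j)).toReal
  have hRnn : 0 ≤ ∫ x in V i, ∫ y in V j, (W x y) ^ 2 :=
    integral_nonneg fun x => integral_nonneg fun y => sq_nonneg _
  by_cases hwi : wi = 0
  · rw [hwi]; simpa using hRnn
  by_cases hwj : wj = 0
  · rw [hwj]; simp only [mul_zero, zero_mul]; exact hRnn
  have hwi' : 0 < wi := lt_of_le_of_ne ENNReal.toReal_nonneg (Ne.symm hwi)
  have hwj' : 0 < wj := lt_of_le_of_ne ENNReal.toReal_nonneg (Ne.symm hwj)
  have hs := sq_II_le hW hC (part_vol_ne_top hVu i) (part_vol_ne_top hVu j)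
  unfold avg
  have heq : wi * wj * ((∫ x in V i, ∫ y in V j, W x y) / wi / wj) ^ 2
      = (∫ x in V i, ∫ y in V j, W x y) ^ 2 / (wi * wj) := by
    field_simp
  rw [heq, div_le_iff₀ (by positivity)]
  nlinarith [hs]

end Partition

lemma regroup {ι κ : Type} [Fintype ι] [Fintype κ] (p : κ → ι) (fib : ι → Finset κ)
    (hfib : ∀ i a, a ∈ fib i ↔ p a = i) (F : κ → κ → ℝ) :
    ∑ a, ∑ b, F a b = ∑ i, ∑ j, ∑ a ∈ fib i, ∑ b ∈ fib j, F a b := by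
  classical
  have h1 : ∀ (G : κ → ℝ), ∑ a, G a = ∑ i, ∑ a ∈ fib i, G a := by
    intro G
    rw [← Finset.sum_fiberwise Finset.univ p G]
    refine Finset.sum_congr rfl fun i _ => Finset.sum_congr ?_ fun _ _ => rfl
    ext a; simp [hfib]
  rw [h1 (fun a => ∑ b, F a b)]
  refine Finset.sum_congr rfl fun i _ => ?_
  calc ∑ a ∈ fib i, ∑ b, F a b = ∑ a ∈ fib i, ∑ j, ∑ b ∈ fib j, F a b :=
        Finset.sum_congr rfl fun a _ => h1 (F a)
    _ = ∑ j, ∑ a ∈ fib i, ∑ b ∈ fib j, F a b := Finset.sum_comm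

lemma energy_diff_alg {ι κ : Type} [Fintype ι] [Fintype κ] (p : κ → ι) (fib : ι → Finset κ)
    (hfib : ∀ i a, a ∈ fib i ↔ p a = i)
    (wV : ι → ℝ) (wQ : κ → ℝ) (tV : ι → ι → ℝ) (tQ : κ → κ → ℝ)
    (hw : ∀ i, ∑ a ∈ fib i, wQ a = wV i)
    (hII : ∀ i j, ∑ a ∈ fib i, ∑ b ∈ fib j, wQ a * wQ b * tQ a b
      = wV i * wV j * tV i j) :
    ∑ a, ∑ b, wQ a * wQ b * (tQ a b - tV (p a) (p b)) ^ 2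
      = (∑ a, ∑ b, wQ a * wQ b * tQ a b ^ 2)
        - (∑ i, ∑ j, wV i * wV j * tV i j ^ 2) := by
  rw [regroup p fib hfib (fun a b => wQ a * wQ b * (tQ a b - tV (p a) (p b)) ^ 2),
    regroup p fib hfib (fun a b => wQ a * wQ b * tQ a b ^ 2), ← Finset.sum_sub_distrib]
  refine Finset.sum_congr rfl fun i _ => ?_
  rw [← Finset.sum_sub_distrib]
  refine Finset.sum_congr rfl fun j _ => ?_
  have hrw : ∑ a ∈ fib i, ∑ b ∈ fib j, wQ a * wQ b * (tQ a b - tV (p a) (p b)) ^ 2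
      = ∑ a ∈ fib i, ∑ b ∈ fib j, wQ a * wQ b * (tQ a b - tV i j) ^ 2 := by
    refine Finset.sum_congr rfl fun a ha => Finset.sum_congr rfl fun b hb => ?_
    rw [(hfib i a).1 ha, (hfib j b).1 hb]
  rw [hrw]
  exact parallel_axis (fib i) (fib j) wQ tQ (wV i) (wV j) (tV i j)
    (hw i) (hw j) (hII i j)

section Refine

variable {W : ℝ → ℝ → ℝ} {C : ℝ}
variable {ι : Type} [Fintype ι] {V : ι → Set ℝ} {S T : Set ℝ}

/-- Refinement of the partition `V` by the sets `S` and `T`. -/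
def refP (V : ι → Set ℝ) (S T : Set ℝ) : ι × Bool × Bool → Set ℝ := fun a =>
  V a.1 ∩ (bif a.2.1 then S else Set.Icc (0:ℝ) 1 \ S)
    ∩ (bif a.2.2 then T else Set.Icc (0:ℝ) 1 \ T)

lemma refP_measurable (hVm : ∀ i, MeasurableSet (V i))
    (hSm : MeasurableSet S) (hTm : MeasurableSet T) (a : ι × Bool × Bool) :
    MeasurableSet (refP V S T a) := by
  unfold refP
  refine (( hVm a.1).inter ?_).inter ?_
  · cases a.2.1
    · exact measurableSet_Icc.diff hSm
    · exact hSm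
  · cases a.2.2
    · exact measurableSet_Icc.diff hTm
    · exact hTm

lemma refP_disjoint (hVd : Pairwise (Disjoint on V)) :
    Pairwise (Disjoint on refP V S T) := by
  rintro ⟨i, s, t⟩ ⟨j, s', t'⟩ hne
  rw [Function.onFun, Set.disjoint_left]
  rintro x ⟨⟨hxV, hxS⟩, hxT⟩ ⟨⟨hxV', hxS'⟩, hxT'⟩
  have hij : i = j := by
    by_contra h
    exact (hVd h).ne_of_mem hxV hxV' rfl
  have hs : s = s' := by
    cases s <;> cases s' <;> simp_all [Set.mem_diff]
  have ht : t = t' := by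
    cases t <;> cases t' <;> simp_all [Set.mem_diff]
  exact hne (by rw [hij, hs, ht])

lemma refP_union (hVu : ⋃ i, V i = Set.Icc (0:ℝ) 1) :
    ⋃ a, refP V S T a = Set.Icc (0:ℝ) 1 := by
  apply Set.Subset.antisymm
  · refine Set.iUnion_subset fun a => ?_
    exact fun x hx => part_subset hVu a.1 hx.1.1
  · intro x hx
    have : x ∈ ⋃ i, V i := hVu.symm ▸ hx
    obtain ⟨_, ⟨i, rfl⟩, hxV⟩ := this
    by_cases hS : x ∈ S <;> by_cases hT : x ∈ T
    · exact Set.mem_iUnion.2 ⟨(i, true, true), ⟨⟨hxV, hS⟩, hT⟩⟩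
    · exact Set.mem_iUnion.2 ⟨(i, true, false), ⟨⟨hxV, hS⟩, ⟨hx, hT⟩⟩⟩
    · exact Set.mem_iUnion.2 ⟨(i, false, true), ⟨⟨hxV, ⟨hx, hS⟩⟩, hT⟩⟩
    · exact Set.mem_iUnion.2 ⟨(i, false, false), ⟨⟨hxV, ⟨hx, hS⟩⟩, ⟨hx, hT⟩⟩⟩

end Refine


lemma cs_double {κ : Type} (σ τ : Finset κ) (u : κ → ℝ) (v : κ → κ → ℝ)
    (hu : ∀ a, 0 ≤ u a) :
    (∑ a ∈ σ, ∑ b ∈ τ, u a * u b * v a b) ^ 2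
      ≤ (∑ a ∈ σ, ∑ b ∈ τ, u a * u b)
        * ∑ a ∈ σ, ∑ b ∈ τ, u a * u b * v a b ^ 2 := by
  have h1 : ∑ a ∈ σ, ∑ b ∈ τ, u a * u b * v a b
      = ∑ z ∈ σ ×ˢ τ, (Real.sqrt (u z.1 * u z.2)) * (Real.sqrt (u z.1 * u z.2) * v z.1 z.2) := by
    rw [Finset.sum_product (f := fun z : κ × κ =>
      (Real.sqrt (u z.1 * u z.2)) * (Real.sqrt (u z.1 * u z.2) * v z.1 z.2))]
    refine Finset.sum_congr rfl fun a _ => Finset.sum_congr rfl fun b _ => ?_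
    rw [← mul_assoc, Real.mul_self_sqrt (mul_nonneg (hu a) (hu b))]
  have h2 : ∑ a ∈ σ, ∑ b ∈ τ, u a * u b
      = ∑ z ∈ σ ×ˢ τ, (Real.sqrt (u z.1 * u z.2)) ^ 2 := by
    rw [Finset.sum_product (f := fun z : κ × κ => (Real.sqrt (u z.1 * u z.2)) ^ 2)]
    refine Finset.sum_congr rfl fun a _ => Finset.sum_congr rfl fun b _ => ?_
    rw [Real.sq_sqrt (mul_nonneg (hu a) (hu b))]
  have h3 : ∑ a ∈ σ, ∑ b ∈ τ, u a * u b * v a b ^ 2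
      = ∑ z ∈ σ ×ˢ τ, (Real.sqrt (u z.1 * u z.2) * v z.1 z.2) ^ 2 := by
    rw [Finset.sum_product (f := fun z : κ × κ =>
      (Real.sqrt (u z.1 * u z.2) * v z.1 z.2) ^ 2)]
    refine Finset.sum_congr rfl fun a _ => Finset.sum_congr rfl fun b _ => ?_
    rw [mul_pow, Real.sq_sqrt (mul_nonneg (hu a) (hu b))]
  rw [h1, h2, h3]
  exact Finset.sum_mul_sq_le_sq_mul_sq _ _ _

lemma double_sum_le_of_subset {κ : Type} [Fintype κ] (σ τ : Finset κ) (F : κ → κ → ℝ)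
    (hF : ∀ a b, 0 ≤ F a b) :
    ∑ a ∈ σ, ∑ b ∈ τ, F a b ≤ ∑ a, ∑ b, F a b := by
  calc ∑ a ∈ σ, ∑ b ∈ τ, F a b
      ≤ ∑ a ∈ σ, ∑ b, F a b := Finset.sum_le_sum fun a _ =>
        Finset.sum_le_sum_of_subset_of_nonneg (Finset.subset_univ _) fun b _ _ => hF a b
    _ ≤ ∑ a, ∑ b, F a b := Finset.sum_le_sum_of_subset_of_nonneg (Finset.subset_univ _)
        fun a _ _ => Finset.sum_nonneg fun b _ => hF a b

section RefineMain

variable {W : ℝ → ℝ → ℝ} {C : ℝ}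
variable {ι : Type} [Fintype ι] {V : ι → Set ℝ} {S T : Set ℝ}

set_option maxHeartbeats 2000000 in
lemma refine_le (hW : Measurable (Function.uncurry W)) (hC : ∀ x y, |W x y| ≤ C)
    (hVm : ∀ i, MeasurableSet (V i)) (hVd : Pairwise (Disjoint on V))
    (hVu : ⋃ i, V i = Set.Icc (0:ℝ) 1)
    (hSm : MeasurableSet S) (hTm : MeasurableSet T)
    (hSsub : S ⊆ Set.Icc (0:ℝ) 1) (hTsub : T ⊆ Set.Icc (0:ℝ) 1) :
    energy W V + (∫ x in S, ∫ y in T, (W x y - stepW V W x y)) ^ 2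
      ≤ energy W (refP V S T) := by
  classical
  set Q := refP V S T with hQdef
  set p : ι × Bool × Bool → ι := fun a => a.1 with hp
  set fib : ι → Finset (ι × Bool × Bool) :=
    fun i => Finset.univ.filter fun a => a.1 = i with hfibdef
  have hfib : ∀ i a, a ∈ fib i ↔ p a = i := by
    intro i a; simp [hfibdef, hp]
  have hQm : ∀ a, MeasurableSet (Q a) := refP_measurable hVm hSm hTm
  have hQd : Pairwise (Disjoint on Q) := refP_disjoint hVd
  have hQu : ⋃ a, Q a = Set.Icc (0:ℝ) 1 := refP_union hVu
  have hQsub : ∀ a, Q a ⊆ V a.1 := fun a x hx => hx.1.1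
  have hQfin : ∀ a, volume (Q a) ≠ ⊤ := part_vol_ne_top hQu
  have hVfin : ∀ i, volume (V i) ≠ ⊤ := part_vol_ne_top hVu
  set wQ : ι × Bool × Bool → ℝ := fun a => (volume (Q a)).toReal with hwQ
  set wV : ι → ℝ := fun i => (volume (V i)).toReal with hwV
  set tQ : (ι × Bool × Bool) → (ι × Bool × Bool) → ℝ := fun a b => avg W (Q a) (Q b)
    with htQ
  set tV : ι → ι → ℝ := fun i j => avg W (V i) (V j) with htV
  -- fiber unions recover the original parts
  have hfU : ∀ i, ⋃ a ∈ fib i, Q a = V i := by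
    intro i
    apply Set.Subset.antisymm
    · refine Set.iUnion₂_subset fun a ha => ?_
      have : a.1 = i := (hfib i a).1 ha
      exact this ▸ hQsub a
    · intro x hx
      have hxI : x ∈ Set.Icc (0:ℝ) 1 := part_subset hVu i hx
      by_cases hS : x ∈ S <;> by_cases hT : x ∈ T
      · exact Set.mem_biUnion ((hfib i (i, true, true)).2 rfl) ⟨⟨hx, hS⟩, hT⟩
      · exact Set.mem_biUnion ((hfib i (i, true, false)).2 rfl) ⟨⟨hx, hS⟩, ⟨hxI, hT⟩⟩
      · exact Set.mem_biUnion ((hfib i (i, false, true)).2 rfl) ⟨⟨hx, ⟨hxI, hS⟩⟩, hT⟩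
      · exact Set.mem_biUnion ((hfib i (i, false, false)).2 rfl)
          ⟨⟨hx, ⟨hxI, hS⟩⟩, ⟨hxI, hT⟩⟩
  have hwfib : ∀ i, ∑ a ∈ fib i, wQ a = wV i := by
    intro i
    have hm : volume (⋃ a ∈ fib i, Q a) = ∑ a ∈ fib i, volume (Q a) :=
      measure_biUnion_finset ((hQd.set_pairwise _).mono' fun _ _ h => h)
        (fun a _ => hQm a)
    rw [hfU i] at hm
    rw [hwV, hwQ]
    simp only
    rw [hm, ENNReal.toReal_sum fun a _ => hQfin a]
  have hIIfib : ∀ i j, ∑ a ∈ fib i, ∑ b ∈ fib j, wQ a * wQ b * tQ a b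
      = wV i * wV j * tV i j := by
    intro i j
    have hb := blocky hW hC Q hQm hQd hQfin (fib i) (fib j)
    rw [hfU i, hfU j] at hb
    calc ∑ a ∈ fib i, ∑ b ∈ fib j, wQ a * wQ b * tQ a b
        = ∑ a ∈ fib i, ∑ b ∈ fib j, ∫ x in Q a, ∫ y in Q b, W x y := by
          refine Finset.sum_congr rfl fun a _ => Finset.sum_congr rfl fun b _ => ?_
          exact II_eq W (hQfin a) (hQfin b)
      _ = ∫ x in V i, ∫ y in V j, W x y := hb.symm
      _ = wV i * wV j * tV i j := (II_eq W (hVfin i) (hVfin j)).symm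
  -- energy difference
  have hediff : ∑ a, ∑ b, wQ a * wQ b * (tQ a b - tV (p a) (p b)) ^ 2
      = energy W Q - energy W V := by
    rw [energy_diff_alg p fib hfib wV wQ tV tQ hwfib hIIfib]
    rfl
  -- the step function is bounded and measurable
  set B := ∑ i, ∑ j, |avg W (V i) (V j)| with hB
  have hDmeas : Measurable (Function.uncurry fun x y => W x y - stepW V W x y) := by
    have : (Function.uncurry fun x y => W x y - stepW V W x y)
        = fun q : ℝ × ℝ => Function.uncurry W q - Function.uncurry (stepW V W) q := rfl
    rw [this]
    exact hW.sub (step_measurable hVm W)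
  have hDb : ∀ x y, |W x y - stepW V W x y| ≤ C + B := fun x y =>
    (abs_sub _ _).trans (add_le_add (hC x y) (step_abs_le V W x y))
  have hstepb : ∀ x y, |stepW V W x y| ≤ B := fun x y => step_abs_le V W x y
  -- selected fibers recovering S and T
  set σ : Finset (ι × Bool × Bool) := Finset.univ.filter fun a => a.2.1 = true with hσ
  set τ : Finset (ι × Bool × Bool) := Finset.univ.filter fun a => a.2.2 = true with hτ
  have hSun : ⋃ a ∈ σ, Q a = S := by
    apply Set.Subset.antisymm
    · refine Set.iUnion₂_subset fun a ha => ?_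
      have ha' : a.2.1 = true := by simpa [hσ] using ha
      intro x hx
      have := hx.1.2
      rwa [ha'] at this
    · intro x hx
      have hxI : x ∈ Set.Icc (0:ℝ) 1 := hSsub hx
      have : x ∈ ⋃ i, V i := hVu.symm ▸ hxI
      obtain ⟨_, ⟨i, rfl⟩, hxV⟩ := this
      by_cases hT : x ∈ T
      · exact Set.mem_biUnion (Finset.mem_filter.2 ⟨Finset.mem_univ _, rfl⟩)
          (show x ∈ Q (i, true, true) from ⟨⟨hxV, hx⟩, hT⟩)
      · exact Set.mem_biUnion (Finset.mem_filter.2 ⟨Finset.mem_univ _, rfl⟩)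
          (show x ∈ Q (i, true, false) from ⟨⟨hxV, hx⟩, ⟨hxI, hT⟩⟩)
  have hTun : ⋃ a ∈ τ, Q a = T := by
    apply Set.Subset.antisymm
    · refine Set.iUnion₂_subset fun a ha => ?_
      have ha' : a.2.2 = true := by simpa [hτ] using ha
      intro x hx
      have := hx.2
      rwa [ha'] at this
    · intro x hx
      have hxI : x ∈ Set.Icc (0:ℝ) 1 := hTsub hx
      have : x ∈ ⋃ i, V i := hVu.symm ▸ hxI
      obtain ⟨_, ⟨i, rfl⟩, hxV⟩ := this
      by_cases hS : x ∈ S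
      · exact Set.mem_biUnion (Finset.mem_filter.2 ⟨Finset.mem_univ _, rfl⟩)
          (show x ∈ Q (i, true, true) from ⟨⟨hxV, hS⟩, hx⟩)
      · exact Set.mem_biUnion (Finset.mem_filter.2 ⟨Finset.mem_univ _, rfl⟩)
          (show x ∈ Q (i, false, true) from ⟨⟨hxV, ⟨hxI, hS⟩⟩, hx⟩)
  -- block formula for the integral of W - step over Q a × Q b
  have hblockD : ∀ a b, ∫ x in Q a, ∫ y in Q b, (W x y - stepW V W x y)
      = wQ a * wQ b * (tQ a b - tV (p a) (p b)) := by
    intro a b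
    have hsplit : ∀ x, ∫ y in Q b, (W x y - stepW V W x y)
        = (∫ y in Q b, W x y) - ∫ y in Q b, stepW V W x y := fun x =>
      integral_sub (intOn hW hC (hQfin b) x)
        (intOn (step_measurable hVm W) hstepb (hQfin b) x)
    have houter : ∫ x in Q a, ∫ y in Q b, (W x y - stepW V W x y)
        = (∫ x in Q a, ∫ y in Q b, W x y) - ∫ x in Q a, ∫ y in Q b, stepW V W x y := by
      rw [setIntegral_congr_fun (hQm a) (fun x _ => hsplit x)]
      exact integral_sub (intOn_outer hW hC (hQfin a) (hQfin b))
        (intOn_outer (step_measurable hVm W) hstepb (hQfin a) (hQfin b))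
    have hstepint : ∫ x in Q a, ∫ y in Q b, stepW V W x y
        = wQ a * (wQ b * tV (p a) (p b)) := by
      have hin : ∀ x ∈ Q a, ∫ y in Q b, stepW V W x y = wQ b * tV (p a) (p b) := by
        intro x hx
        rw [setIntegral_congr_fun (hQm b)
          (fun y hy => step_eq W hVd (hQsub a hx) (hQsub b hy))]
        rw [setIntegral_const, smul_eq_mul]; rfl
      rw [setIntegral_congr_fun (hQm a) hin, setIntegral_const, smul_eq_mul]; rfl
    rw [houter, hstepint, ← II_eq W (hQfin a) (hQfin b)]
    show wQ a * wQ b * tQ a b - wQ a * (wQ b * tV (p a) (p b)) = _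
    ring
  -- the deviation integral as a block sum
  have hδ : ∫ x in S, ∫ y in T, (W x y - stepW V W x y)
      = ∑ a ∈ σ, ∑ b ∈ τ, wQ a * wQ b * (tQ a b - tV (p a) (p b)) := by
    rw [← hSun, ← hTun, blocky hDmeas hDb Q hQm hQd hQfin σ τ]
    exact Finset.sum_congr rfl fun a _ => Finset.sum_congr rfl fun b _ => hblockD a b
  -- Cauchy–Schwarz
  set d : (ι × Bool × Bool) → (ι × Bool × Bool) → ℝ :=
    fun a b => tQ a b - tV (p a) (p b) with hd
  have hwnn : ∀ a, 0 ≤ wQ a := fun a => ENNReal.toReal_nonneg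
  have hcs : (∑ a ∈ σ, ∑ b ∈ τ, wQ a * wQ b * d a b) ^ 2
      ≤ (∑ a ∈ σ, ∑ b ∈ τ, wQ a * wQ b)
        * ∑ a ∈ σ, ∑ b ∈ τ, wQ a * wQ b * d a b ^ 2 := cs_double σ τ wQ d hwnn
  have hw1 : ∑ a ∈ σ, ∑ b ∈ τ, wQ a * wQ b ≤ 1 := by
    have hall : ∑ a, ∑ b, wQ a * wQ b = 1 := by
      rw [← Finset.sum_mul_sum]
      rw [part_wsum hQm hQd hQu]
      norm_num
    calc ∑ a ∈ σ, ∑ b ∈ τ, wQ a * wQ b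
        ≤ ∑ a, ∑ b, wQ a * wQ b := double_sum_le_of_subset σ τ _
          (fun a b => mul_nonneg (hwnn a) (hwnn b))
      _ = 1 := hall
  have hw2 : ∑ a ∈ σ, ∑ b ∈ τ, wQ a * wQ b * d a b ^ 2
      ≤ ∑ a, ∑ b, wQ a * wQ b * d a b ^ 2 :=
    double_sum_le_of_subset σ τ _ (fun a b => by positivity)
  have hnn2 : 0 ≤ ∑ a ∈ σ, ∑ b ∈ τ, wQ a * wQ b * d a b ^ 2 :=
    Finset.sum_nonneg fun a _ => Finset.sum_nonneg fun b _ => by positivity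
  have hfinal : (∫ x in S, ∫ y in T, (W x y - stepW V W x y)) ^ 2
      ≤ energy W Q - energy W V := by
    rw [hδ]
    calc (∑ a ∈ σ, ∑ b ∈ τ, wQ a * wQ b * d a b) ^ 2
        ≤ (∑ a ∈ σ, ∑ b ∈ τ, wQ a * wQ b)
          * ∑ a ∈ σ, ∑ b ∈ τ, wQ a * wQ b * d a b ^ 2 := hcs
      _ ≤ 1 * ∑ a ∈ σ, ∑ b ∈ τ, wQ a * wQ b * d a b ^ 2 :=
          mul_le_mul_of_nonneg_right hw1 hnn2
      _ = ∑ a ∈ σ, ∑ b ∈ τ, wQ a * wQ b * d a b ^ 2 := one_mul _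
      _ ≤ ∑ a, ∑ b, wQ a * wQ b * d a b ^ 2 := hw2
      _ = energy W Q - energy W V := hediff
  linarith

end RefineMain

lemma cutNormA_le_of_forall (𝒜 : Set (Set ℝ)) (f : ℝ → ℝ → ℝ) {b : ℝ} (hb : 0 ≤ b)
    (h : ∀ S ∈ 𝒜, ∀ T ∈ 𝒜, |∫ x in S, ∫ y in T, f x y| ≤ b) : cutNormA 𝒜 f ≤ b :=
  Real.sSup_le (fun r hr => by obtain ⟨S, hS, T, hT, rfl⟩ := hr; exact h S hS T hT) hb

lemma step_reindex {ι : Type} [Fintype ι] {m : ℕ} (e : Fin m ≃ ι) (V : ι → Set ℝ)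
    (W : ℝ → ℝ → ℝ) (x y : ℝ) : stepW (fun i => V (e i)) W x y = stepW V W x y := by
  unfold stepW
  calc ∑ i : Fin m, ∑ j : Fin m,
        Set.indicator (V (e i)) (fun _ => (1:ℝ)) x * Set.indicator (V (e j)) (fun _ => (1:ℝ)) y *
          ((∫ u in V (e i), ∫ v in V (e j), W u v) /
            (volume (V (e i))).toReal / (volume (V (e j))).toReal)
      = ∑ i : Fin m, ∑ j : ι,
        Set.indicator (V (e i)) (fun _ => (1:ℝ)) x * Set.indicator (V j) (fun _ => (1:ℝ)) y *
          ((∫ u in V (e i), ∫ v in V j, W u v) /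
            (volume (V (e i))).toReal / (volume (V j)).toReal) :=
        Finset.sum_congr rfl fun i _ => Equiv.sum_comp e (fun j => 
          Set.indicator (V (e i)) (fun _ => (1:ℝ)) x * Set.indicator (V j) (fun _ => (1:ℝ)) y *
            ((∫ u in V (e i), ∫ v in V j, W u v) /
              (volume (V (e i))).toReal / (volume (V j)).toReal))
    _ = _ := Equiv.sum_comp e (fun i => ∑ j : ι,
        Set.indicator (V i) (fun _ => (1:ℝ)) x * Set.indicator (V j) (fun _ => (1:ℝ)) y *
          ((∫ u in V i, ∫ v in V j, W u v) /
            (volume (V i)).toReal / (volume (V j)).toReal))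

/-- The main induction: at stage `k` we either have a good partition, or one whose
energy is at least `k · ε² ‖W‖₂²`. -/
lemma induct (𝒜 : Set (Set ℝ)) (h𝒜 : SetAlgebra 𝒜) (W : ℝ → ℝ → ℝ)
    (hW : Measurable (Function.uncurry W)) {C : ℝ} (hC : ∀ x y, |W x y| ≤ C)
    {ε : ℝ} (hε : 0 < ε) (k : ℕ) :
    ∃ (ι : Type) (_ : Fintype ι) (V : ι → Set ℝ),
      (∀ i, MeasurableSet (V i)) ∧ Pairwise (Disjoint on V) ∧
      (⋃ i, V i) = Set.Icc (0:ℝ) 1 ∧ (∀ i, V i ∈ 𝒜) ∧ Fintype.card ι ≤ 4 ^ k ∧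
      (cutNormA 𝒜 (fun x y => W x y - stepW V W x y) ≤ ε * L2Norm W ∨
        (k : ℝ) * (ε ^ 2 * (∫ x in Set.Icc (0:ℝ) 1, ∫ y in Set.Icc (0:ℝ) 1, (W x y) ^ 2))
          ≤ energy W V) := by
  induction k with
  | zero =>
    refine ⟨PUnit, inferInstance, fun _ => Set.Icc (0:ℝ) 1, fun _ => measurableSet_Icc,
      Subsingleton.pairwise, Set.iUnion_const _, fun _ => h𝒜.univ_mem, by simp, Or.inr ?_⟩
    simpa using energy_nonneg (W := W) (V := fun _ : PUnit => Set.Icc (0:ℝ) 1)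
  | succ k ih =>
    obtain ⟨ι, hfin, V, hVm, hVd, hVu, hV𝒜, hcard, hor⟩ := ih
    have hcard' : Fintype.card ι ≤ 4 ^ (k + 1) :=
      hcard.trans (Nat.pow_le_pow_right (by norm_num) (Nat.le_succ k))
    rcases hor with hgood | hE
    · exact ⟨ι, hfin, V, hVm, hVd, hVu, hV𝒜, hcard', Or.inl hgood⟩
    by_cases hgood : ∀ S ∈ 𝒜, ∀ T ∈ 𝒜,
        |∫ x in S, ∫ y in T, (W x y - stepW V W x y)| ≤ ε * L2Norm W
    · refine ⟨ι, hfin, V, hVm, hVd, hVu, hV𝒜, hcard', Or.inl ?_⟩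
      exact cutNormA_le_of_forall 𝒜 _
        (mul_nonneg hε.le (Real.sqrt_nonneg _)) hgood
    push_neg at hgood
    obtain ⟨S, hS, T, hT, hST⟩ := hgood
    set V' := refP V S T with hV'
    have hV'm : ∀ a, MeasurableSet (V' a) :=
      refP_measurable hVm (h𝒜.measurable S hS) (h𝒜.measurable T hT)
    have hV'd : Pairwise (Disjoint on V') := refP_disjoint hVd
    have hV'u : ⋃ a, V' a = Set.Icc (0:ℝ) 1 := refP_union hVu
    have hV'𝒜 : ∀ a, V' a ∈ 𝒜 := by
      rintro ⟨i, s, t⟩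
      refine h𝒜.inter_mem _ (h𝒜.inter_mem _ (hV𝒜 i) _ ?_) _ ?_
      · cases s
        · exact h𝒜.compl_mem S hS
        · exact hS
      · cases t
        · exact h𝒜.compl_mem T hT
        · exact hT
    have hV'card : Fintype.card (ι × Bool × Bool) ≤ 4 ^ (k + 1) := by
      have : Fintype.card (ι × Bool × Bool) = Fintype.card ι * 4 := by
        simp [Fintype.card_prod]
      rw [this, pow_succ]
      exact Nat.mul_le_mul_right 4 hcard
    refine ⟨ι × Bool × Bool, inferInstance, V', hV'm, hV'd, hV'u, hV'𝒜, hV'card, Or.inr ?_⟩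
    set nw2 := ∫ x in Set.Icc (0:ℝ) 1, ∫ y in Set.Icc (0:ℝ) 1, (W x y) ^ 2 with hnw2
    have hnw2nn : 0 ≤ nw2 :=
      integral_nonneg fun x => integral_nonneg fun y => sq_nonneg _
    have hL2 : L2Norm W = Real.sqrt nw2 := rfl
    have hkey := refine_le hW hC hVm hVd hVu (h𝒜.measurable S hS) (h𝒜.measurable T hT)
      (h𝒜.subset_Icc S hS) (h𝒜.subset_Icc T hT)
    have hsq : ε ^ 2 * nw2 < (∫ x in S, ∫ y in T, (W x y - stepW V W x y)) ^ 2 := by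
      have h1 : ε * Real.sqrt nw2 ≥ 0 := mul_nonneg hε.le (Real.sqrt_nonneg _)
      have h2 : (ε * Real.sqrt nw2) ^ 2 < (∫ x in S, ∫ y in T, (W x y - stepW V W x y)) ^ 2 := by
        rw [← sq_abs (∫ x in S, ∫ y in T, (W x y - stepW V W x y))]
        apply pow_lt_pow_left₀ _ h1 (by norm_num)
        rw [← hL2]; exact hST
      calc ε ^ 2 * nw2 = (ε * Real.sqrt nw2) ^ 2 := by
            rw [mul_pow, Real.sq_sqrt hnw2nn]
        _ < _ := h2
    have hEi : (k : ℝ) * (ε ^ 2 * nw2) ≤ energy W V := hE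
    push_cast
    nlinarith [hkey, hsq, hEi]

end WeakReg

open WeakReg

/-- Weak regularity with respect to an algebra `𝒜`: for every graphon `W` and
`ε > 0` there is a partition of `[0,1]` into at most `4^{⌈1/ε²⌉−1}` classes
belonging to `𝒜` such that `‖W − W_P‖_{𝒜,□} ≤ ε ‖W‖₂`. -/
theorem weak_regularity_algebra (𝒜 : Set (Set ℝ)) (h𝒜 : SetAlgebra 𝒜)
    (W : ℝ → ℝ → ℝ)
    (hmeas : Measurable (Function.uncurry W)) (hsymm : ∀ x y, W x y = W y x)
    (hbdd : ∃ C : ℝ, ∀ x y, |W x y| ≤ C)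
    (ε : ℝ) (hε : 0 < ε) :
    ∃ (m : ℕ) (V : Fin m → Set ℝ), IsPartition V ∧ (∀ i, V i ∈ 𝒜) ∧
      m ≤ 4 ^ (Nat.ceil (1 / ε ^ 2) - 1) ∧
      cutNormA 𝒜 (fun x y => W x y - stepW V W x y) ≤ ε * L2Norm W := by
  obtain ⟨C, hC⟩ := hbdd
  set k := Nat.ceil (1 / ε ^ 2) - 1 with hk
  obtain ⟨ι, hfin, V, hVm, hVd, hVu, hV𝒜, hcard, hor⟩ :=
    induct 𝒜 h𝒜 W hmeas hC hε k
  set nw2 := ∫ x in Set.Icc (0:ℝ) 1, ∫ y in Set.Icc (0:ℝ) 1, (W x y) ^ 2 with hnw2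
  have hnw2nn : 0 ≤ nw2 :=
    MeasureTheory.integral_nonneg fun x => MeasureTheory.integral_nonneg fun y => sq_nonneg _
  have hL2 : L2Norm W = Real.sqrt nw2 := rfl
  have hgoal : cutNormA 𝒜 (fun x y => W x y - stepW V W x y) ≤ ε * L2Norm W := by
    rcases hor with h | hE
    · exact h
    by_cases hgood : ∀ S ∈ 𝒜, ∀ T ∈ 𝒜,
        |∫ x in S, ∫ y in T, (W x y - stepW V W x y)| ≤ ε * L2Norm W
    · exact cutNormA_le_of_forall 𝒜 _ (mul_nonneg hε.le (Real.sqrt_nonneg _)) hgood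
    exfalso
    push_neg at hgood
    obtain ⟨S, hS, T, hT, hST⟩ := hgood
    have hV'm := refP_measurable (S := S) (T := T) hVm (h𝒜.measurable S hS)
      (h𝒜.measurable T hT)
    have hV'd := refP_disjoint (S := S) (T := T) hVd
    have hV'u := refP_union (S := S) (T := T) hVu
    have hkey := refine_le hmeas hC hVm hVd hVu (h𝒜.measurable S hS) (h𝒜.measurable T hT)
      (h𝒜.subset_Icc S hS) (h𝒜.subset_Icc T hT)
    have hup : energy W (refP V S T) ≤ nw2 := energy_le hmeas hC hV'm hV'd hV'u
    have hsq : ε ^ 2 * nw2 < (∫ x in S, ∫ y in T, (W x y - stepW V W x y)) ^ 2 := by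
      have h1 : 0 ≤ ε * Real.sqrt nw2 := mul_nonneg hε.le (Real.sqrt_nonneg _)
      have h2 : (ε * Real.sqrt nw2) ^ 2
          < (∫ x in S, ∫ y in T, (W x y - stepW V W x y)) ^ 2 := by
        rw [← sq_abs (∫ x in S, ∫ y in T, (W x y - stepW V W x y))]
        apply pow_lt_pow_left₀ _ h1 (by norm_num)
        rw [← hL2]; exact hST
      calc ε ^ 2 * nw2 = (ε * Real.sqrt nw2) ^ 2 := by
            rw [mul_pow, Real.sq_sqrt hnw2nn]
        _ < _ := h2
    have hceil : 0 < Nat.ceil (1 / ε ^ 2) := Nat.ceil_pos.2 (by positivity)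
    have hk1 : k + 1 = Nat.ceil (1 / ε ^ 2) := by
      rw [hk]; omega
    have hge : 1 / ε ^ 2 ≤ (k : ℝ) + 1 := by
      have := Nat.le_ceil (1 / ε ^ 2)
      rw [← hk1] at this
      exact_mod_cast this
    have hmul : (1 / ε ^ 2) * (ε ^ 2 * nw2) ≤ ((k : ℝ) + 1) * (ε ^ 2 * nw2) :=
      mul_le_mul_of_nonneg_right hge (by positivity)
    have hval : (1 / ε ^ 2) * (ε ^ 2 * nw2) = nw2 := by field_simp
    have hE' : (k : ℝ) * (ε ^ 2 * nw2) ≤ energy W V := hE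
    nlinarith [hkey, hsq, hup, hmul, hval, hE']
  set m := Fintype.card ι with hm
  set e := (Fintype.equivFin ι).symm with he
  refine ⟨m, fun i => V (e i),
    ⟨fun i => hVm _, fun i j hij => hVd (e.injective.ne hij),
      (e.surjective.iUnion_comp V).trans hVu⟩,
    fun i => hV𝒜 _, hcard, ?_⟩
  have hstep : (fun x y => W x y - stepW (fun i => V (e i)) W x y)
      = fun x y => W x y - stepW V W x y := by
    funext x y
    rw [step_reindex e V W x y]
  rw [hstep]
  exact hgoal
end

section
/- Let G be a weighted graph on n nodes with node weights 1 and edge weights in [0,1], and let 𝐆(G) be the random simple graph on the same vertex set obtained by including each edge ij (i ≠ j) independently with probability β_{ij}(G). Then with probability greater than 1 − 2^{−n}, the labeled cut distance satisfies d_□(G, 𝐆(G)) < 4/√n. -/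
open MeasureTheory

/-- The probability space for random graphs on `[n]`: one independent uniform
`[0,1]` variable per unordered pair of vertices. -/
noncomputable def edgeSpace (n : ℕ) : Measure (Sym2 (Fin n) → ℝ) :=
  Measure.pi fun _ => volume.restrict (Set.Icc (0:ℝ) 1)

/-- The (0-1 valued) adjacency matrix of the random graph `𝐆(G)`: the edge `ij`
(`i ≠ j`) is present iff the uniform variable attached to `{i,j}` is below the
edge weight `β i j`; loops are ignored. -/
noncomputable def randAdj (n : ℕ) (β : Fin n → Fin n → ℝ)
    (ω : Sym2 (Fin n) → ℝ) : Fin n → Fin n → ℝ :=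
  fun i j => if i ≠ j ∧ ω s(i, j) ≤ β i j then 1 else 0

/-- The labeled cut distance of two weighted graphs on `[n]` with node
weights `1`: `d_□(A,B) = max_{S,T ⊆ [n]} |e_A(S,T) − e_B(S,T)|/n²`. -/
noncomputable def dcut (n : ℕ) (A B : Fin n → Fin n → ℝ) : ℝ :=
  ⨆ S : Finset (Fin n), ⨆ T : Finset (Fin n),
    |∑ i ∈ S, ∑ j ∈ T, (A i j - B i j)| / (n : ℝ) ^ 2

section Aux
open Real

noncomputable def mu0 : Measure ℝ := volume.restrict (Set.Icc (0:ℝ) 1)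

instance : IsProbabilityMeasure mu0 := by
  constructor; simp [mu0, Real.volume_Icc]

variable {n : ℕ} (β : Fin n → Fin n → ℝ) (hβs : ∀ i j, β i j = β j i)

noncomputable def bh (β : Fin n → Fin n → ℝ) (hβs : ∀ i j, β i j = β j i) :
    Sym2 (Fin n) → ℝ :=
  Sym2.lift ⟨β, fun a b => hβs a b⟩

noncomputable def gfun (β : Fin n → Fin n → ℝ) (hβs : ∀ i j, β i j = β j i)
    (e : Sym2 (Fin n)) (x : ℝ) : ℝ :=
  bh β hβs e - if x ≤ bh β hβs e then 1 else 0

lemma bh_mem (hβ : ∀ i j, β i j ∈ Set.Icc (0:ℝ) 1) (e : Sym2 (Fin n)) :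
    bh β hβs e ∈ Set.Icc (0:ℝ) 1 := by
  induction e using Sym2.ind with
  | _ a b => exact hβ a b

lemma gfun_measurable (e : Sym2 (Fin n)) : Measurable (gfun β hβs e) := by
  unfold gfun
  exact measurable_const.sub (Measurable.ite measurableSet_Iic
    measurable_const measurable_const)

lemma gfun_abs_le (hβ : ∀ i j, β i j ∈ Set.Icc (0:ℝ) 1) (e : Sym2 (Fin n)) (x : ℝ) :
    |gfun β hβs e x| ≤ 1 := by
  obtain ⟨h0, h1⟩ := bh_mem β hβs hβ e
  unfold gfun
  by_cases hx : x ≤ bh β hβs e <;> simp [hx, abs_le] <;> constructor <;> linarith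

lemma integral_ind {b : ℝ} (h0 : 0 ≤ b) (h1 : b ≤ 1) :
    ∫ x, (if x ≤ b then (1:ℝ) else 0) ∂mu0 = b := by
  have heq : (fun x : ℝ => if x ≤ b then (1:ℝ) else 0)
      = Set.indicator (Set.Iic b) (fun _ => 1) := by
    ext x; simp [Set.indicator, Set.mem_Iic]
  rw [heq, integral_indicator measurableSet_Iic, setIntegral_const]
  have hmu : mu0 (Set.Iic b) = ENNReal.ofReal b := by
    rw [mu0, Measure.restrict_apply measurableSet_Iic]
    have : Set.Iic b ∩ Set.Icc 0 1 = Set.Icc 0 b := by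
      ext x
      simp only [Set.mem_inter_iff, Set.mem_Iic, Set.mem_Icc]
      exact ⟨fun ⟨hx, hx0, _⟩ => ⟨hx0, hx⟩, fun ⟨hx0, hx⟩ => ⟨hx, hx0, hx.trans h1⟩⟩
    rw [this, Real.volume_Icc]; simp
  simp [measureReal_def, hmu, ENNReal.toReal_ofReal h0]

lemma ind_integrable (b : ℝ) :
    Integrable (fun x => if x ≤ b then (1:ℝ) else 0) mu0 := by
  refine Integrable.mono' (integrable_const 1)
    ((Measurable.ite measurableSet_Iic measurable_const
      measurable_const).aestronglyMeasurable)
    (Filter.Eventually.of_forall fun x => ?_)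
  by_cases h : x ≤ b <;> simp [h]

lemma gfun_integral (hβ : ∀ i j, β i j ∈ Set.Icc (0:ℝ) 1) (e : Sym2 (Fin n)) :
    ∫ x, gfun β hβs e x ∂mu0 = 0 := by
  obtain ⟨h0, h1⟩ := bh_mem β hβs hβ e
  unfold gfun
  rw [integral_sub (integrable_const _) (ind_integrable _), integral_const,
    integral_ind h0 h1]
  simp

section PiProd

noncomputable local instance (priority := 2000) myMS : MeasureSpace ℝ := ⟨mu0⟩

local instance : SigmaFinite (volume : Measure ℝ) := inferInstanceAs (SigmaFinite mu0)

lemma pi_prod_integral {ι : Type*} [Fintype ι] (f : ι → ℝ → ℝ) :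
    ∫ x : ι → ℝ, ∏ i, f i (x i) ∂(Measure.pi fun _ => mu0) = ∏ i, ∫ x, f i x ∂mu0 :=
  integral_fintype_prod_eq_prod f

end PiProd

lemma exp_quad {v : ℝ} (hv : |v| ≤ 1) : exp v ≤ 1 + v + 3 / 4 * v ^ 2 := by
  have h := Real.exp_bound hv (n := 2) (by norm_num)
  have h2 : |exp v - (1 + v)| ≤ |v| ^ 2 * (3 / 4) := by
    convert h using 2
    · simp [Finset.sum_range_succ]
    · norm_num
  have := abs_le.1 h2
  nlinarith [sq_abs v]

lemma coord_mgf {h : ℝ → ℝ} (hm : Measurable h) (hb : ∀ x, |h x| ≤ 1)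
    (h0 : ∫ x, h x ∂mu0 = 0) {u : ℝ} (hu : |u| ≤ 1) :
    ∫ x, exp (u * h x) ∂mu0 ≤ exp (3 / 4 * u ^ 2) := by
  have hint : Integrable h mu0 :=
    Integrable.mono' (integrable_const 1) hm.aestronglyMeasurable
      (Filter.Eventually.of_forall fun x => by simpa using hb x)
  have hintexp : Integrable (fun x => exp (u * h x)) mu0 := by
    refine Integrable.mono' (integrable_const (exp 1))
      ((measurable_exp.comp (hm.const_mul u)).aestronglyMeasurable)
      (Filter.Eventually.of_forall fun x => ?_)
    rw [Real.norm_eq_abs, abs_exp]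
    apply exp_le_exp.2
    calc u * h x ≤ |u * h x| := le_abs_self _
    _ = |u| * |h x| := abs_mul _ _
    _ ≤ 1 * 1 := mul_le_mul hu (hb x) (abs_nonneg _) zero_le_one
    _ = 1 := one_mul 1
  have key : ∫ x, exp (u * h x) ∂mu0 ≤ ∫ x, (1 + 3 / 4 * u ^ 2 + u * h x) ∂mu0 := by
    refine integral_mono hintexp ((integrable_const _).add (hint.const_mul u)) fun x => ?_
    have habs : |u * h x| ≤ 1 := by
      calc |u * h x| = |u| * |h x| := abs_mul _ _
      _ ≤ 1 * 1 := mul_le_mul hu (hb x) (abs_nonneg _) zero_le_one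
      _ = 1 := one_mul 1
    have hq := exp_quad habs
    have hx2 : h x ^ 2 ≤ 1 := by nlinarith [sq_abs (h x), abs_nonneg (h x), hb x]
    have hsq : (u * h x) ^ 2 ≤ u ^ 2 := by
      rw [mul_pow]; nlinarith [sq_nonneg u]
    calc exp (u * h x) ≤ 1 + u * h x + 3 / 4 * (u * h x) ^ 2 := hq
    _ ≤ 1 + 3 / 4 * u ^ 2 + u * h x := by nlinarith
  have heval : ∫ x, (1 + 3 / 4 * u ^ 2 + u * h x) ∂mu0 = 1 + 3 / 4 * u ^ 2 := by
    rw [integral_add (integrable_const _) (hint.const_mul u), integral_const]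
    simp [integral_const_mul, h0]
  rw [heval] at key
  exact key.trans (by linarith [Real.add_one_le_exp (3 / 4 * u ^ 2)])

lemma mgf_sum (w : Sym2 (Fin n) → ℝ) (h : Sym2 (Fin n) → ℝ → ℝ)
    (hm : ∀ e, Measurable (h e)) (hb : ∀ e x, |h e x| ≤ 1)
    (h0 : ∀ e, ∫ x, h e x ∂mu0 = 0) (t : ℝ) (ht : ∀ e, |t * w e| ≤ 1) :
    ∫ ω, exp (t * ∑ e, w e * h e (ω e)) ∂(Measure.pi fun _ : Sym2 (Fin n) => mu0)
      ≤ exp (3 / 4 * t ^ 2 * ∑ e, (w e) ^ 2) := by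
  have hrw : ∀ ω : Sym2 (Fin n) → ℝ,
      exp (t * ∑ e, w e * h e (ω e)) = ∏ e, exp (t * w e * h e (ω e)) := by
    intro ω
    rw [← Real.exp_sum, Finset.mul_sum]
    congr 1
    exact Finset.sum_congr rfl fun e _ => by ring
  simp_rw [hrw]
  rw [pi_prod_integral (f := fun e x => exp (t * w e * h e x))]
  calc ∏ e, ∫ x, exp (t * w e * h e x) ∂mu0
      ≤ ∏ e : Sym2 (Fin n), exp (3 / 4 * (t * w e) ^ 2) :=
        Finset.prod_le_prod (fun e _ => integral_nonneg fun x => (exp_pos _).le)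
          (fun e _ => coord_mgf (hm e) (hb e) (h0 e) (ht e))
    _ = exp (∑ e, 3 / 4 * (t * w e) ^ 2) := (Real.exp_sum _ _).symm
    _ = exp (3 / 4 * t ^ 2 * ∑ e, (w e) ^ 2) := by
        congr 1
        rw [Finset.mul_sum]
        exact Finset.sum_congr rfl fun e _ => by ring

lemma chernoff_tail (w : Sym2 (Fin n) → ℝ) (hw : ∀ e, 0 ≤ w e)
    (h : Sym2 (Fin n) → ℝ → ℝ)
    (hm : ∀ e, Measurable (h e)) (hb : ∀ e x, |h e x| ≤ 1)
    (h0 : ∀ e, ∫ x, h e x ∂mu0 = 0) (t : ℝ) (ht0 : 0 < t)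
    (ht : ∀ e, |t * w e| ≤ 1) (s : ℝ) :
    (Measure.pi fun _ : Sym2 (Fin n) => mu0) {ω | s ≤ ∑ e, w e * h e (ω e)}
      ≤ ENNReal.ofReal (exp (3 / 4 * t ^ 2 * (∑ e, (w e) ^ 2) - t * s)) := by
  set μ := Measure.pi fun _ : Sym2 (Fin n) => mu0 with hμ
  set X : (Sym2 (Fin n) → ℝ) → ℝ := fun ω => ∑ e, w e * h e (ω e) with hX
  have hXm : Measurable X := by
    apply Finset.measurable_sum
    intro e _
    exact ((hm e).comp (measurable_pi_apply e)).const_mul (w e)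
  have hXbd : ∀ ω, X ω ≤ ∑ e, w e := by
    intro ω
    apply Finset.sum_le_sum
    intro e _
    calc w e * h e (ω e) ≤ w e * 1 := by
          have := (abs_le.1 (hb e (ω e))).2
          exact mul_le_mul_of_nonneg_left this (hw e)
      _ = w e := mul_one _
  have hfm : Measurable fun ω => exp (t * X ω) := measurable_exp.comp (hXm.const_mul t)
  have hfi : Integrable (fun ω => exp (t * X ω)) μ := by
    refine Integrable.mono' (integrable_const (exp (t * ∑ e, w e)))
      hfm.aestronglyMeasurable (Filter.Eventually.of_forall fun ω => ?_)
    rw [Real.norm_eq_abs, abs_exp]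
    exact exp_le_exp.2 (mul_le_mul_of_nonneg_left (hXbd ω) ht0.le)
  have hmgf : ∫ ω, exp (t * X ω) ∂μ ≤ exp (3 / 4 * t ^ 2 * ∑ e, (w e) ^ 2) :=
    mgf_sum w h hm hb h0 t ht
  have hsub : {ω | s ≤ X ω} ⊆ {ω | exp (t * s) ≤ exp (t * X ω)} := fun ω hω =>
    exp_le_exp.2 (mul_le_mul_of_nonneg_left hω ht0.le)
  have hmark := mul_meas_ge_le_integral_of_nonneg
    (Filter.Eventually.of_forall fun ω => (exp_pos (t * X ω)).le) hfi (exp (t * s))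
  have hmono : μ {ω | s ≤ X ω} ≤ μ {ω | exp (t * s) ≤ exp (t * X ω)} := measure_mono hsub
  have hfin : μ {ω | exp (t * s) ≤ exp (t * X ω)} ≠ ⊤ := measure_ne_top _ _
  have htr : (μ {ω | s ≤ X ω}).toReal
      ≤ exp (3 / 4 * t ^ 2 * (∑ e, (w e) ^ 2) - t * s) := by
    have h1 : (μ {ω | s ≤ X ω}).toReal ≤ (μ {ω | exp (t * s) ≤ exp (t * X ω)}).toReal :=
      ENNReal.toReal_mono hfin hmono
    have h2 : exp (t * s) * (μ {ω | exp (t * s) ≤ exp (t * X ω)}).toReal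
        ≤ exp (3 / 4 * t ^ 2 * ∑ e, (w e) ^ 2) := le_trans hmark hmgf
    have h3 : (μ {ω | exp (t * s) ≤ exp (t * X ω)}).toReal
        ≤ exp (3 / 4 * t ^ 2 * (∑ e, (w e) ^ 2)) / exp (t * s) := by
      rw [le_div_iff₀ (exp_pos _)]
      linarith [h2]
    rw [← Real.exp_sub] at h3
    exact h1.trans h3
  rw [← ENNReal.ofReal_toReal (measure_ne_top μ _)]
  exact ENNReal.ofReal_le_ofReal htr

def wgt (S T : Finset (Fin n)) (e : Sym2 (Fin n)) : ℕ :=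
  ((S ×ˢ T).filter fun p => p.1 ≠ p.2 ∧ s(p.1, p.2) = e).card

lemma bh_mk (i j : Fin n) : bh β hβs s(i, j) = β i j := rfl

lemma decomp (S T : Finset (Fin n)) (ω : Sym2 (Fin n) → ℝ) :
    ∑ i ∈ S, ∑ j ∈ T, (β i j - randAdj n β ω i j)
      = (∑ i ∈ S ∩ T, β i i)
        + ∑ e : Sym2 (Fin n), (wgt S T e : ℝ) * gfun β hβs e (ω e) := by
  rw [← Finset.sum_product']
  rw [← Finset.sum_filter_add_sum_filter_not (S ×ˢ T) (fun p => p.1 = p.2)]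
  congr 1
  · -- diagonal part
    rw [Finset.sum_congr rfl (g := fun p => β p.1 p.1) ?_]
    · -- reindex to S ∩ T
      apply Finset.sum_nbij' (i := fun p => p.1) (j := fun i => (i, i))
      · intro p hp
        simp only [Finset.mem_filter, Finset.mem_product] at hp
        simp only [Finset.mem_inter]
        exact ⟨hp.1.1, hp.2 ▸ hp.1.2⟩
      · intro i hi
        simp only [Finset.mem_inter] at hi
        simp [Finset.mem_filter, Finset.mem_product, hi.1, hi.2]
      · intro p hp
        simp only [Finset.mem_filter] at hp
        exact Prod.ext rfl hp.2
      · intro i _; rfl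
      · intro p _; rfl
    · intro p hp
      simp only [Finset.mem_filter] at hp
      have : randAdj n β ω p.1 p.2 = 0 := by
        simp [randAdj, hp.2]
      rw [this, sub_zero, ← hp.2]
  · -- off-diagonal part
    have hstep : ∀ p ∈ (S ×ˢ T).filter (fun p => ¬p.1 = p.2),
        β p.1 p.2 - randAdj n β ω p.1 p.2 = gfun β hβs s(p.1, p.2) (ω s(p.1, p.2)) := by
      intro p hp
      simp only [Finset.mem_filter] at hp
      have hne : p.1 ≠ p.2 := hp.2
      simp only [gfun, bh_mk, randAdj]
      by_cases hle : ω s(p.1, p.2) ≤ β p.1 p.2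
      · simp [hne, hle]
      · simp [hne, hle]
    rw [Finset.sum_congr rfl hstep]
    rw [← Finset.sum_fiberwise' ((S ×ˢ T).filter (fun p => ¬p.1 = p.2))
      (fun p => s(p.1, p.2)) (fun e => gfun β hβs e (ω e))]
    apply Finset.sum_congr rfl
    intro e _
    rw [Finset.sum_const, nsmul_eq_mul]
    congr 2
    rw [wgt, Finset.filter_filter]

lemma wgt_le_two (S T : Finset (Fin n)) (e : Sym2 (Fin n)) : wgt S T e ≤ 2 := by
  induction e using Sym2.ind with
  | _ a b =>
    have hsub : ((S ×ˢ T).filter fun p => p.1 ≠ p.2 ∧ s(p.1, p.2) = s(a, b))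
        ⊆ {(a, b), (b, a)} := by
      intro p hp
      simp only [Finset.mem_filter] at hp
      rcases Sym2.eq_iff.1 hp.2.2 with ⟨h1, h2⟩ | ⟨h1, h2⟩
      · simp [Finset.mem_insert, Prod.ext_iff, h1, h2]
      · simp [Finset.mem_insert, Prod.ext_iff, h1, h2]
    exact le_trans (Finset.card_le_card hsub)
      (le_trans (Finset.card_insert_le _ _) (by simp))

lemma sum_wgt_le (S T : Finset (Fin n)) :
    ∑ e : Sym2 (Fin n), (wgt S T e : ℝ) ≤ (n : ℝ) ^ 2 := by
  have hnat : ∑ e : Sym2 (Fin n), wgt S T e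
      = ((S ×ˢ T).filter fun p => p.1 ≠ p.2).card := by
    rw [Finset.card_eq_sum_card_fiberwise
      (f := fun p => s(p.1, p.2)) (t := Finset.univ) (fun _ _ => Finset.mem_univ _)]
    apply Finset.sum_congr rfl
    intro e _
    rw [wgt, Finset.filter_filter]
  have hle : ((S ×ˢ T).filter fun p => p.1 ≠ p.2).card ≤ n ^ 2 := by
    calc _ ≤ (S ×ˢ T).card := Finset.card_filter_le _ _
    _ = S.card * T.card := Finset.card_product _ _
    _ ≤ n * n := Nat.mul_le_mul (by simpa using Finset.card_le_card (Finset.subset_univ S))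
        (by simpa using Finset.card_le_card (Finset.subset_univ T))
    _ = n ^ 2 := (sq n).symm
  calc ∑ e : Sym2 (Fin n), (wgt S T e : ℝ)
      = ((((S ×ˢ T).filter fun p => p.1 ≠ p.2).card : ℕ) : ℝ) := by
        rw [← hnat]; push_cast; ring
  _ ≤ ((n ^ 2 : ℕ) : ℝ) := by exact_mod_cast hle
  _ = (n : ℝ) ^ 2 := by push_cast; ring

lemma sum_wgt_sq_le (S T : Finset (Fin n)) :
    ∑ e : Sym2 (Fin n), ((wgt S T e : ℝ)) ^ 2 ≤ 2 * (n : ℝ) ^ 2 := by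
  have h1 : ∑ e : Sym2 (Fin n), ((wgt S T e : ℝ)) ^ 2
      ≤ ∑ e : Sym2 (Fin n), 2 * (wgt S T e : ℝ) := by
    apply Finset.sum_le_sum
    intro e _
    have h2 : (wgt S T e : ℝ) ≤ 2 := by exact_mod_cast wgt_le_two S T e
    have h0 : (0 : ℝ) ≤ (wgt S T e : ℝ) := Nat.cast_nonneg _
    nlinarith
  calc _ ≤ _ := h1
  _ = 2 * ∑ e : Sym2 (Fin n), (wgt S T e : ℝ) := by rw [Finset.mul_sum]
  _ ≤ 2 * (n : ℝ) ^ 2 := by linarith [sum_wgt_le S T]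


lemma pair_tail (hn16 : 16 ≤ n) (hβ : ∀ i j, β i j ∈ Set.Icc (0:ℝ) 1)
    (S T : Finset (Fin n)) :
    (Measure.pi fun _ : Sym2 (Fin n) => mu0)
      {ω | 15 / 4 * (n : ℝ) * Real.sqrt n
        ≤ |∑ e, (wgt S T e : ℝ) * gfun β hβs e (ω e)|}
      ≤ 2 * ENNReal.ofReal (exp (-(75 / 32) * n)) := by
  have hnR : (16 : ℝ) ≤ n := by exact_mod_cast hn16
  have hn0 : (0 : ℝ) < n := by linarith
  have h4 : (4 : ℝ) ≤ Real.sqrt n := by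
    rw [show (4:ℝ) = Real.sqrt  16 by
      rw [show (16:ℝ) = 4 ^ 2 by norm_num, Real.sqrt_sq (by norm_num)]]
    exact Real.sqrt_le_sqrt hnR
  have hsp : (0 : ℝ) < Real.sqrt n := by linarith
  set w : Sym2 (Fin n) → ℝ := fun e => (wgt S T e : ℝ) with hwdef
  have hw : ∀ e, 0 ≤ w e := fun e => Nat.cast_nonneg _
  set t : ℝ := 5 / (4 * Real.sqrt n) with htdef
  have ht0 : 0 < t := by positivity
  have ht516 : t ≤ 5 / 16 := by
    rw [htdef, div_le_div_iff₀ (by positivity) (by norm_num)]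
    nlinarith
  have ht1 : ∀ e, |t * w e| ≤ 1 := by
    intro e
    rw [abs_of_nonneg (by positivity)]
    have hw2 : w e ≤ 2 := by
      simp only [hwdef]; exact_mod_cast wgt_le_two S T e
    calc t * w e ≤ 5 / 16 * 2 :=
          mul_le_mul ht516 hw2 (hw e) (by norm_num)
      _ ≤ 1 := by norm_num
  set s : ℝ := 15 / 4 * (n : ℝ) * Real.sqrt n with hsdef
  have hexp : 3 / 4 * t ^ 2 * (∑ e, (w e) ^ 2) - t * s ≤ -(75 / 32) * n := by
    have ht2 : t ^ 2 = 25 / (16 * n) := by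
      rw [htdef, div_pow, mul_pow, Real.sq_sqrt hn0.le]; norm_num
    have hts : t * s = 75 / 16 * n := by
      rw [htdef, hsdef]
      field_simp
      ring
    have h1 : 3 / 4 * t ^ 2 * (∑ e, (w e) ^ 2) ≤ 3 / 4 * t ^ 2 * (2 * (n : ℝ) ^ 2) :=
      mul_le_mul_of_nonneg_left (sum_wgt_sq_le S T) (by positivity)
    have h2 : 3 / 4 * t ^ 2 * (2 * (n : ℝ) ^ 2) = 75 / 32 * n := by
      rw [ht2]; field_simp; ring
    linarith
  have hup := chernoff_tail w hw (gfun β hβs) (gfun_measurable β hβs)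
    (gfun_abs_le β hβs hβ) (gfun_integral β hβs hβ) t ht0 ht1 s
  have hlo := chernoff_tail w hw (fun e x => -(gfun β hβs e x))
    (fun e => (gfun_measurable β hβs e).neg)
    (fun e x => by rw [abs_neg]; exact gfun_abs_le β hβs hβ e x)
    (fun e => by rw [integral_neg, gfun_integral β hβs hβ e, neg_zero])
    t ht0 ht1 s
  have hbound : ENNReal.ofReal (exp (3 / 4 * t ^ 2 * (∑ e, (w e) ^ 2) - t * s))
      ≤ ENNReal.ofReal (exp (-(75 / 32) * n)) :=
    ENNReal.ofReal_le_ofReal (exp_le_exp.2 hexp)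
  have hsub : {ω : Sym2 (Fin n) → ℝ | s ≤ |∑ e, w e * gfun β hβs e (ω e)|}
      ⊆ {ω | s ≤ ∑ e, w e * gfun β hβs e (ω e)}
        ∪ {ω | s ≤ ∑ e, w e * -(gfun β hβs e (ω e))} := by
    intro ω hω
    simp only [Set.mem_setOf_eq] at hω
    rcases le_abs.1 hω with h | h
    · exact Or.inl h
    · refine Or.inr ?_
      have : (∑ e, w e * -(gfun β hβs e (ω e)))
          = -∑ e, w e * gfun β hβs e (ω e) := by
        rw [← Finset.sum_neg_distrib]
        exact Finset.sum_congr rfl fun e _ => (mul_neg _ _)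
      rw [Set.mem_setOf_eq, this]
      exact h
  refine (measure_mono hsub).trans ((measure_union_le _ _).trans ?_)
  rw [two_mul]
  exact add_le_add (hup.trans hbound) (hlo.trans hbound)

end Aux

open Real in
/-- For a weighted graph `G` on `n` nodes with node weights `1` and edge
weights in `[0,1]`, with probability greater than `1 − 2^{−n}` the random
graph `𝐆(G)` satisfies `d_□(G, 𝐆(G)) < 4/√n`. -/
theorem random_graph_close (n : ℕ) (hn : 0 < n)
    (β : Fin n → Fin n → ℝ) (hβs : ∀ i j, β i j = β j i)
    (hβ : ∀ i j, β i j ∈ Set.Icc (0:ℝ) 1) :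
    edgeSpace n {ω | dcut n β (randAdj n β ω) < 4 / Real.sqrt n} >
      1 - (2 : ENNReal)⁻¹ ^ n := by

  have hmeq : edgeSpace n = (Measure.pi fun _ : Sym2 (Fin n) => mu0) := rfl
  haveI : IsProbabilityMeasure (edgeSpace n) := by rw [hmeq]; infer_instance
  have hb1 : ((2:ENNReal)⁻¹) ^ n ≤ 1 := pow_le_one' (ENNReal.inv_le_one.2 one_le_two) n
  have hbne : ((2:ENNReal)⁻¹) ^ n ≠ 0 :=
    pow_ne_zero n (ENNReal.inv_ne_zero.2 ENNReal.ofNat_ne_top)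
  by_cases hsmall : n < 16
  · -- trivial case
    have hset : {ω : Sym2 (Fin n) → ℝ | dcut n β (randAdj n β ω) < 4 / Real.sqrt n}
        = Set.univ := by
      ext ω
      simp only [Set.mem_setOf_eq, Set.mem_univ, iff_true]
      have hnp : (0:ℝ) < n := by exact_mod_cast hn
      have hlt16 : (n:ℝ) < 16 := by exact_mod_cast hsmall
      have hsp : 0 < Real.sqrt n := Real.sqrt_pos.2 hnp
      have hs4 : Real.sqrt n < 4 := by
        rw [show (4:ℝ) = Real.sqrt 16 by
          rw [show (16:ℝ) = 4 ^ 2 by norm_num, Real.sqrt_sq (by norm_num)]]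
        exact Real.sqrt_lt_sqrt hnp.le hlt16
      have h1 : (1:ℝ) < 4 / Real.sqrt n := by rw [lt_div_iff₀ hsp]; linarith
      refine lt_of_le_of_lt ?_ h1
      unfold dcut
      refine ciSup_le fun S => ciSup_le fun T => ?_
      rw [div_le_one (by positivity)]
      have hterm : ∀ i j, |β i j - randAdj n β ω i j| ≤ 1 := by
        intro i j
        obtain ⟨h0, h1'⟩ := hβ i j
        have hv : randAdj n β ω i j = 0 ∨ randAdj n β ω i j = 1 := by
          unfold randAdj; split <;> simp
        rcases hv with hv | hv <;> rw [hv, abs_le] <;> constructor <;> linarith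
      have hcS : (S.card : ℝ) ≤ n := by
        have := Finset.card_le_card (Finset.subset_univ S)
        simp only [Finset.card_univ, Fintype.card_fin] at this
        exact_mod_cast this
      have hcT : (T.card : ℝ) ≤ n := by
        have := Finset.card_le_card (Finset.subset_univ T)
        simp only [Finset.card_univ, Fintype.card_fin] at this
        exact_mod_cast this
      calc |∑ i ∈ S, ∑ j ∈ T, (β i j - randAdj n β ω i j)|
          ≤ ∑ i ∈ S, |∑ j ∈ T, (β i j - randAdj n β ω i j)| :=
            Finset.abs_sum_le_sum_abs _ _
        _ ≤ ∑ i ∈ S, ∑ j ∈ T, |β i j - randAdj n β ω i j| :=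
            Finset.sum_le_sum fun i _ => Finset.abs_sum_le_sum_abs _ _
        _ ≤ ∑ i ∈ S, ∑ j ∈ T, (1:ℝ) :=
            Finset.sum_le_sum fun i _ => Finset.sum_le_sum fun j _ => hterm i j
        _ = (S.card : ℝ) * T.card := by
            simp [Finset.sum_const, nsmul_eq_mul, mul_comm]
        _ ≤ (n:ℝ) * n := mul_le_mul hcS hcT (by positivity) hnp.le
        _ = (n:ℝ) ^ 2 := (sq _).symm
    rw [hset, measure_univ]
    exact ENNReal.sub_lt_self ENNReal.one_ne_top one_ne_zero hbne
  · push_neg at hsmall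
    have hnR : (16:ℝ) ≤ n := by exact_mod_cast hsmall
    have hn0 : (0:ℝ) < n := by linarith
    have h4 : (4:ℝ) ≤ Real.sqrt n := by
      rw [show (4:ℝ) = Real.sqrt 16 by
        rw [show (16:ℝ) = 4 ^ 2 by norm_num, Real.sqrt_sq (by norm_num)]]
      exact Real.sqrt_le_sqrt hnR
    have hsp : (0:ℝ) < Real.sqrt n := by linarith
    set s : ℝ := 15 / 4 * (n : ℝ) * Real.sqrt n with hsdef
    set O : Finset (Fin n) → Finset (Fin n) → (Sym2 (Fin n) → ℝ) → ℝ :=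
      fun S T ω => ∑ e, (wgt S T e : ℝ) * gfun β hβs e (ω e) with hOdef
    set B : Finset (Fin n) × Finset (Fin n) → Set (Sym2 (Fin n) → ℝ) :=
      fun p => {ω | s ≤ |O p.1 p.2 ω|} with hBdef
    have hOmeas : ∀ S T, Measurable (O S T) := by
      intro S T
      apply Finset.measurable_sum
      intro e _
      exact ((gfun_measurable β hβs e).comp (measurable_pi_apply e)).const_mul _
    have hBmeas : ∀ p, MeasurableSet (B p) := fun p =>
      measurableSet_le measurable_const (hOmeas p.1 p.2).abs
    have hBbound : ∀ p : Finset (Fin n) × Finset (Fin n),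
        edgeSpace n (B p) ≤ 2 * ENNReal.ofReal (exp (-(75/32) * n)) := by
      intro p
      rw [hmeq]
      exact pair_tail β hβs hsmall hβ p.1 p.2
    have hbad : edgeSpace n (⋃ p, B p)
        ≤ ((2^n * 2^n : ℕ) : ENNReal) * (2 * ENNReal.ofReal (exp (-(75/32) * n))) := by
      calc edgeSpace n (⋃ p, B p) ≤ ∑' p, edgeSpace n (B p) := measure_iUnion_le _
        _ = ∑ p : Finset (Fin n) × Finset (Fin n), edgeSpace n (B p) := tsum_fintype _
        _ ≤ ∑ _p : Finset (Fin n) × Finset (Fin n),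
            (2 * ENNReal.ofReal (exp (-(75/32) * n))) :=
            Finset.sum_le_sum fun p _ => hBbound p
        _ = (Fintype.card (Finset (Fin n) × Finset (Fin n)) : ENNReal)
            * (2 * ENNReal.ofReal (exp (-(75/32) * n))) := by
            rw [Finset.sum_const, Finset.card_univ, nsmul_eq_mul]
        _ = ((2^n * 2^n : ℕ) : ENNReal) * (2 * ENNReal.ofReal (exp (-(75/32) * n))) := by
            congr 2
            simp [Fintype.card_prod, Fintype.card_finset, Fintype.card_fin]
    have hkey : 2 * (8:ℝ)^n < exp (75/32 * n) := by
      have hl8 : Real.log 8 = 3 * Real.log 2 := by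
        rw [show (8:ℝ) = 2 ^ 3 by norm_num, Real.log_pow]; push_cast; ring
      have hlog : Real.log (2 * 8^n) < 75/32 * n := by
        rw [Real.log_mul (by norm_num) (by positivity), Real.log_pow, hl8]
        have hl2 : Real.log 2 < 0.6931471808 := Real.log_two_lt_d9
        have hl2p : 0 < Real.log 2 := Real.log_pos (by norm_num)
        have hcast : (n:ℝ) ≥ 16 := hnR
        nlinarith
      calc 2 * (8:ℝ)^n = exp (Real.log (2 * 8^n)) := (Real.exp_log (by positivity)).symm
        _ < exp (75/32 * n) := exp_lt_exp.2 hlog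
    have hnum : ((2^n * 2^n : ℕ) : ENNReal) * (2 * ENNReal.ofReal (exp (-(75/32) * n)))
        < (2:ENNReal)⁻¹ ^ n := by
      have hcast : ((2^n * 2^n : ℕ) : ENNReal) = ENNReal.ofReal ((2:ℝ)^n * 2^n) := by
        rw [← ENNReal.ofReal_natCast]; congr 1; push_cast; ring
      have h2 : (2:ENNReal) * ENNReal.ofReal (exp (-(75/32) * n))
          = ENNReal.ofReal (2 * exp (-(75/32) * n)) := by
        rw [ENNReal.ofReal_mul (by norm_num : (0:ℝ) ≤ 2)]
        norm_num
      have hpow : (2:ENNReal)⁻¹ ^ n = ENNReal.ofReal ((2⁻¹ : ℝ) ^ n) := by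
        rw [ENNReal.ofReal_pow (by norm_num), ENNReal.ofReal_inv_of_pos (by norm_num)]
        norm_num
      rw [hcast, h2, hpow, ← ENNReal.ofReal_mul (by positivity)]
      rw [ENNReal.ofReal_lt_ofReal_iff (by positivity)]
      have hexpand : (2:ℝ)^n * 2^n * (2 * exp (-(75/32) * n))
          = (2^n * 2^n * 2) / exp (75/32 * n) := by
        rw [show -(75/32)*(n:ℝ) = -(75/32*(n:ℝ)) by ring, Real.exp_neg]; ring
      rw [hexpand, show ((2:ℝ)⁻¹)^n = 1 / 2^n by rw [inv_pow]; ring]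
      rw [div_lt_div_iff₀ (exp_pos _) (by positivity)]
      calc (2:ℝ)^n * 2^n * 2 * 2^n = 2 * 8^n := by
            rw [show (8:ℝ) = 2*2*2 by norm_num, mul_pow, mul_pow]; ring
        _ < exp (75/32 * n) := hkey
        _ = 1 * exp (75/32 * n) := (one_mul _).symm
    have hsubset : (⋃ p, B p)ᶜ ⊆ {ω | dcut n β (randAdj n β ω) < 4 / Real.sqrt n} := by
      intro ω hω
      simp only [Set.mem_compl_iff, Set.mem_iUnion, not_exists] at hω
      have hO : ∀ S T : Finset (Fin n), |O S T ω| < s := by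
        intro S T
        have h := hω (S, T)
        simp only [hBdef, Set.mem_setOf_eq, not_le] at h
        exact h
      have hfb : ∀ S T : Finset (Fin n),
          |∑ i ∈ S, ∑ j ∈ T, (β i j - randAdj n β ω i j)| / (n:ℝ)^2
            < 4 / Real.sqrt n := by
        intro S T
        have hdec := decomp β hβs S T ω
        have hD0 : (0:ℝ) ≤ ∑ i ∈ S ∩ T, β i i :=
          Finset.sum_nonneg fun i _ => (hβ i i).1
        have hDn : (∑ i ∈ S ∩ T, β i i) ≤ (n:ℝ) := by
          calc ∑ i ∈ S ∩ T, β i i ≤ ∑ _i ∈ S ∩ T, (1:ℝ) :=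
                Finset.sum_le_sum fun i _ => (hβ i i).2
            _ = ((S ∩ T).card : ℝ) := by simp
            _ ≤ (n:ℝ) := by
                have := Finset.card_le_card (Finset.subset_univ (S ∩ T))
                simp only [Finset.card_univ, Fintype.card_fin] at this
                exact_mod_cast this
        have habs : |∑ i ∈ S, ∑ j ∈ T, (β i j - randAdj n β ω i j)|
            < 4 * n * Real.sqrt n := by
          rw [hdec]
          have hOb := hO S T
          calc |(∑ i ∈ S ∩ T, β i i) + O S T ω|
              ≤ |∑ i ∈ S ∩ T, β i i| + |O S T ω| := abs_add_le _ _
            _ = (∑ i ∈ S ∩ T, β i i) + |O S T ω| := by rw [abs_of_nonneg hD0]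
            _ < (n:ℝ) + s := by linarith
            _ ≤ 4 * n * Real.sqrt n := by rw [hsdef]; nlinarith
        rw [div_lt_iff₀ (by positivity)]
        have h44 : 4 / Real.sqrt n * (n:ℝ)^2 = 4 * n * Real.sqrt n := by
          rw [div_mul_eq_mul_div, div_eq_iff hsp.ne']
          nlinarith [Real.mul_self_sqrt hn0.le]
        rw [← h44] at habs
        exact habs
      obtain ⟨S₀, hS₀⟩ := Finite.exists_max (fun S : Finset (Fin n) =>
        ⨆ T : Finset (Fin n),
          |∑ i ∈ S, ∑ j ∈ T, (β i j - randAdj n β ω i j)| / (n:ℝ)^2)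
      obtain ⟨T₀, hT₀⟩ := Finite.exists_max (fun T : Finset (Fin n) =>
        |∑ i ∈ S₀, ∑ j ∈ T, (β i j - randAdj n β ω i j)| / (n:ℝ)^2)
      show dcut n β (randAdj n β ω) < 4 / Real.sqrt n
      have hd1 : dcut n β (randAdj n β ω)
          ≤ ⨆ T : Finset (Fin n),
            |∑ i ∈ S₀, ∑ j ∈ T, (β i j - randAdj n β ω i j)| / (n:ℝ)^2 :=
        ciSup_le hS₀
      have hd2 : (⨆ T : Finset (Fin n),
          |∑ i ∈ S₀, ∑ j ∈ T, (β i j - randAdj n β ω i j)| / (n:ℝ)^2)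
          ≤ |∑ i ∈ S₀, ∑ j ∈ T₀, (β i j - randAdj n β ω i j)| / (n:ℝ)^2 :=
        ciSup_le hT₀
      exact lt_of_le_of_lt (hd1.trans hd2) (hfb S₀ T₀)
    have hUm : MeasurableSet (⋃ p, B p) := MeasurableSet.iUnion hBmeas
    have hcompl : edgeSpace n ((⋃ p, B p)ᶜ) = 1 - edgeSpace n (⋃ p, B p) :=
      prob_compl_eq_one_sub hUm
    have hlt : edgeSpace n (⋃ p, B p) < (2:ENNReal)⁻¹ ^ n := lt_of_le_of_lt hbad hnum
    have hlow : 1 - (2:ENNReal)⁻¹ ^ n < 1 - edgeSpace n (⋃ p, B p) := by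
      have hadd : 1 - (2:ENNReal)⁻¹ ^ n
          + ((2:ENNReal)⁻¹ ^ n - edgeSpace n (⋃ p, B p))
          = 1 - edgeSpace n (⋃ p, B p) := tsub_add_tsub_cancel hb1 hlt.le
      calc 1 - (2:ENNReal)⁻¹ ^ n
          < 1 - (2:ENNReal)⁻¹ ^ n
            + ((2:ENNReal)⁻¹ ^ n - edgeSpace n (⋃ p, B p)) :=
            ENNReal.lt_add_right
              (ne_top_of_le_ne_top ENNReal.one_ne_top tsub_le_self)
              (tsub_pos_of_lt hlt).ne'
        _ = _ := hadd
    calc edgeSpace n {ω | dcut n β (randAdj n β ω) < 4 / Real.sqrt n}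
        ≥ edgeSpace n ((⋃ p, B p)ᶜ) := measure_mono hsubset
      _ = 1 - edgeSpace n (⋃ p, B p) := hcompl
      _ > 1 - (2:ENNReal)⁻¹ ^ n := hlow
end

section
/- Let G and G' be weighted graphs with total node weight 1 and edge weights contained in an interval I. If G and G' have the same edge weight matrix but possibly different node weights α_i and α_i', then δ_□(G, G') ≤ |I| · Σ_i |α_i − α_i'|, where δ_□ is the cut distance defined via fractional overlays. -/
/-- `X` is a fractional overlay (coupling) of the node weight distributions
`α` and `α'`. -/
def IsCoupling {n n' : ℕ} (α : Fin n → ℝ) (α' : Fin n' → ℝ)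
    (X : Fin n → Fin n' → ℝ) : Prop :=
  (∀ i u, 0 ≤ X i u) ∧ (∀ i, ∑ u, X i u = α i) ∧ (∀ u, ∑ i, X i u = α' u)

/-- The cut distance `d_□(G[X], G'[Xᵀ])` of the two overlaid graphs on
`[n]×[n']` determined by a fractional overlay `X`: the maximum over subsets
`S, T ⊆ [n]×[n']` of the node-weighted cut discrepancy. -/
noncomputable def overlayDist {n n' : ℕ} (β : Fin n → Fin n → ℝ)
    (β' : Fin n' → Fin n' → ℝ) (X : Fin n → Fin n' → ℝ) : ℝ :=
  ⨆ S : Finset (Fin n × Fin n'), ⨆ T : Finset (Fin n × Fin n'),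
    |∑ p ∈ S, ∑ q ∈ T, X p.1 p.2 * X q.1 q.2 * (β p.1 q.1 - β' p.2 q.2)|

/-- The cut distance `δ_□(G,G')` of two weighted graphs with total node
weight `1`, via fractional overlays. -/
noncomputable def deltaCut {n n' : ℕ} (α : Fin n → ℝ) (β : Fin n → Fin n → ℝ)
    (α' : Fin n' → ℝ) (β' : Fin n' → Fin n' → ℝ) : ℝ :=
  sInf {r : ℝ | ∃ X : Fin n → Fin n' → ℝ, IsCoupling α α' X ∧
    r = overlayDist β β' X}

/-- If `G` and `G'` have total node weight `1`, edge weights in an interval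
`[a,b]`, equal edge weights but possibly different node weights, then
`δ_□(G,G') ≤ (b−a)·Σᵢ|αᵢ − αᵢ'|`. -/
theorem deltaCut_le_of_eq_edgeweights {n : ℕ}
    (α α' : Fin n → ℝ) (hα : ∀ i, 0 < α i) (hα' : ∀ i, 0 < α' i)
    (hsum : ∑ i, α i = 1) (hsum' : ∑ i, α' i = 1)
    (a b : ℝ) (hab : a ≤ b)
    (β : Fin n → Fin n → ℝ) (hβs : ∀ i j, β i j = β j i)
    (hβ : ∀ i j, β i j ∈ Set.Icc a b) :
    deltaCut α β α' β ≤ (b - a) * ∑ i, |α i - α' i| := by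
  classical
  set m : Fin n → ℝ := fun i => min (α i) (α' i) with hm
  set D : ℝ := ∑ i, (α i - m i) with hDdef
  have hm_le : ∀ i, m i ≤ α i := fun i => min_le_left _ _
  have hm_le' : ∀ i, m i ≤ α' i := fun i => min_le_right _ _
  have hD0 : 0 ≤ D := Finset.sum_nonneg fun i _ => by linarith [hm_le i]
  have hD2 : ∑ i, (α' i - m i) = D := by
    rw [hDdef, Finset.sum_sub_distrib, Finset.sum_sub_distrib, hsum, hsum']
  have habs : ∑ i, |α i - α' i| = 2 * D := by
    have h : ∀ i, |α i - α' i| = (α i - m i) + (α' i - m i) := by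
      intro i
      rcases le_total (α i) (α' i) with h | h
      · rw [abs_of_nonpos (by linarith)]
        have : m i = α i := min_eq_left h
        rw [this]; ring
      · rw [abs_of_nonneg (by linarith)]
        have : m i = α' i := min_eq_right h
        rw [this]; ring
    calc ∑ i, |α i - α' i| = ∑ i, ((α i - m i) + (α' i - m i)) :=
          Finset.sum_congr rfl fun i _ => h i
      _ = D + D := by rw [Finset.sum_add_distrib, hD2]
      _ = 2 * D := by ring
  -- the coupling
  set X : Fin n → Fin n → ℝ :=
    fun i u => (if i = u then m i else 0) + (α i - m i) * (α' u - m u) / D with hX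
  have hdiag0 : D = 0 → ∀ i, α i - m i = 0 := by
    intro hD i
    exact (Finset.sum_eq_zero_iff_of_nonneg
      (fun j _ => by linarith [hm_le j])).1 (hDdef.symm.trans hD) i (Finset.mem_univ i)
  have hdiag0' : D = 0 → ∀ i, α' i - m i = 0 := by
    intro hD i
    exact (Finset.sum_eq_zero_iff_of_nonneg
      (fun j _ => by linarith [hm_le' j])).1 (hD2.trans hD) i (Finset.mem_univ i)
  have hXnn : ∀ i u, 0 ≤ X i u := by
    intro i u
    apply add_nonneg
    · split
      · exact le_min (hα i).le (hα' i).le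
      · exact le_refl 0
    · exact div_nonneg (mul_nonneg (by linarith [hm_le i]) (by linarith [hm_le' u])) hD0
  have hXrow : ∀ i, ∑ u, X i u = α i := by
    intro i
    rw [hX]
    simp only
    rw [Finset.sum_add_distrib]
    have h1 : ∑ u, (if i = u then m i else 0) = m i := by simp
    have h2 : ∑ u, (α i - m i) * (α' u - m u) / D = (α i - m i) * D / D := by
      rw [← hD2, Finset.mul_sum, Finset.sum_div]
    rw [h1, h2]
    by_cases hD : D = 0
    · rw [hdiag0 hD i]; have := hdiag0 hD i; simp; linarith
    · rw [mul_div_assoc, div_self hD]; ring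
  have hXcol : ∀ u, ∑ i, X i u = α' u := by
    intro u
    rw [hX]
    simp only
    rw [Finset.sum_add_distrib]
    have h1 : ∑ i, (if i = u then m i else 0) = m u := by simp
    have h2 : ∑ i, (α i - m i) * (α' u - m u) / D = D * (α' u - m u) / D := by
      rw [hDdef, Finset.sum_mul, Finset.sum_div]
    rw [h1, h2]
    by_cases hD : D = 0
    · rw [hdiag0' hD u]; simp; linarith [hdiag0' hD u]
    · rw [mul_comm, mul_div_assoc, div_self hD]; ring
  have hXdiag : ∀ i, X i i = m i := by
    intro i
    rw [hX]
    simp only [if_pos rfl]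
    rcases le_total (α i) (α' i) with h | h
    · have : m i = α i := min_eq_left h
      rw [this]; simp
    · have : m i = α' i := min_eq_right h
      rw [this]; simp
  -- node weight function on pairs
  set g : Fin n × Fin n → ℝ := fun p => if p.1 = p.2 then 0 else 1 with hg
  have hsumX : ∑ p : Fin n × Fin n, X p.1 p.2 = 1 := by
    rw [Fintype.sum_prod_type]
    simp only [hXrow]
    exact hsum
  have hsumXg : ∑ p : Fin n × Fin n, X p.1 p.2 * g p = D := by
    rw [Fintype.sum_prod_type]
    have h1 : ∀ i : Fin n, ∑ u, X i u * g (i, u) = α i - m i := by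
      intro i
      have h2 : ∀ u, X i u * g (i, u) = X i u - (if i = u then X i u else 0) := by
        intro u
        rw [hg]
        by_cases h : i = u <;> simp [h]
      simp only [h2]
      rw [Finset.sum_sub_distrib, hXrow, Finset.sum_ite_eq]
      simp [hXdiag i]
    simp only [h1]
    exact hDdef.symm
  have hgnn : ∀ p, 0 ≤ g p := by intro p; by_cases h : p.1 = p.2 <;> simp [hg, h]
  -- key estimate per S, T
  have key : ∀ S T : Finset (Fin n × Fin n),
      |∑ p ∈ S, ∑ q ∈ T, X p.1 p.2 * X q.1 q.2 * (β p.1 q.1 - β p.2 q.2)|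
        ≤ (b - a) * (2 * D) := by
    intro S T
    have step1 : |∑ p ∈ S, ∑ q ∈ T, X p.1 p.2 * X q.1 q.2 * (β p.1 q.1 - β p.2 q.2)|
        ≤ ∑ p ∈ S, ∑ q ∈ T, |X p.1 p.2 * X q.1 q.2 * (β p.1 q.1 - β p.2 q.2)| := by
      calc |∑ p ∈ S, ∑ q ∈ T, X p.1 p.2 * X q.1 q.2 * (β p.1 q.1 - β p.2 q.2)|
          ≤ ∑ p ∈ S, |∑ q ∈ T, X p.1 p.2 * X q.1 q.2 * (β p.1 q.1 - β p.2 q.2)| :=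
            Finset.abs_sum_le_sum_abs _ _
        _ ≤ ∑ p ∈ S, ∑ q ∈ T, |X p.1 p.2 * X q.1 q.2 * (β p.1 q.1 - β p.2 q.2)| :=
            Finset.sum_le_sum fun p _ => Finset.abs_sum_le_sum_abs _ _
    have step2 : ∑ p ∈ S, ∑ q ∈ T, |X p.1 p.2 * X q.1 q.2 * (β p.1 q.1 - β p.2 q.2)|
        ≤ ∑ p : Fin n × Fin n, ∑ q : Fin n × Fin n,
            |X p.1 p.2 * X q.1 q.2 * (β p.1 q.1 - β p.2 q.2)| := by
      apply le_trans (Finset.sum_le_sum fun p _ =>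
        Finset.sum_le_sum_of_subset_of_nonneg (Finset.subset_univ T)
          (fun q _ _ => abs_nonneg _))
      exact Finset.sum_le_sum_of_subset_of_nonneg (Finset.subset_univ S)
        (fun p _ _ => Finset.sum_nonneg fun q _ => abs_nonneg _)
    have step3 : ∀ p q : Fin n × Fin n,
        |X p.1 p.2 * X q.1 q.2 * (β p.1 q.1 - β p.2 q.2)|
          ≤ X p.1 p.2 * X q.1 q.2 * (b - a) * (g p + g q) := by
      intro p q
      rw [abs_mul, abs_of_nonneg (mul_nonneg (hXnn _ _) (hXnn _ _))]
      by_cases hp : p.1 = p.2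
      · by_cases hq : q.1 = q.2
        · have hβeq : β p.1 q.1 = β p.2 q.2 := by rw [hp, hq]
          have hgz : g p + g q = 0 := by simp [hg, hp, hq]
          rw [hβeq, sub_self, abs_zero, mul_zero, hgz, mul_zero]
        · have h1 := hβ p.1 q.1
          have h2 := hβ p.2 q.2
          have habs' : |β p.1 q.1 - β p.2 q.2| ≤ b - a := by
            rw [abs_sub_le_iff]
            constructor <;> [linarith [h1.2, h2.1]; linarith [h1.1, h2.2]]
          have hge : (1 : ℝ) ≤ g p + g q := by
            have h1 : g q = 1 := by simp [hg, hq]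
            have h2 := hgnn p
            linarith
          calc X p.1 p.2 * X q.1 q.2 * |β p.1 q.1 - β p.2 q.2|
              ≤ X p.1 p.2 * X q.1 q.2 * (b - a) :=
                mul_le_mul_of_nonneg_left habs' (mul_nonneg (hXnn _ _) (hXnn _ _))
            _ ≤ X p.1 p.2 * X q.1 q.2 * (b - a) * (g p + g q) := by
                nlinarith [mul_nonneg (mul_nonneg (hXnn p.1 p.2) (hXnn q.1 q.2)) (sub_nonneg.2 hab)]
      · have h1 := hβ p.1 q.1
        have h2 := hβ p.2 q.2
        have habs' : |β p.1 q.1 - β p.2 q.2| ≤ b - a := by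
          rw [abs_sub_le_iff]
          constructor <;> [linarith [h1.2, h2.1]; linarith [h1.1, h2.2]]
        have hge : (1 : ℝ) ≤ g p + g q := by
          have h1 : g p = 1 := by simp [hg, hp]
          have h2 := hgnn q
          linarith
        calc X p.1 p.2 * X q.1 q.2 * |β p.1 q.1 - β p.2 q.2|
            ≤ X p.1 p.2 * X q.1 q.2 * (b - a) :=
              mul_le_mul_of_nonneg_left habs' (mul_nonneg (hXnn _ _) (hXnn _ _))
          _ ≤ X p.1 p.2 * X q.1 q.2 * (b - a) * (g p + g q) := by
              nlinarith [mul_nonneg (mul_nonneg (hXnn p.1 p.2) (hXnn q.1 q.2)) (sub_nonneg.2 hab)]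
    have step4 : ∑ p : Fin n × Fin n, ∑ q : Fin n × Fin n,
          X p.1 p.2 * X q.1 q.2 * (b - a) * (g p + g q) = (b - a) * (2 * D) := by
      have h : ∀ p q : Fin n × Fin n,
          X p.1 p.2 * X q.1 q.2 * (b - a) * (g p + g q)
            = (b - a) * ((X p.1 p.2 * g p) * X q.1 q.2
                + X p.1 p.2 * (X q.1 q.2 * g q)) := by
        intro p q; ring
      have h2 : ∀ p : Fin n × Fin n,
          ∑ q : Fin n × Fin n, X p.1 p.2 * X q.1 q.2 * (b - a) * (g p + g q)
            = (b - a) * (X p.1 p.2 * g p + X p.1 p.2 * D) := by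
        intro p
        simp only [h]
        rw [← Finset.mul_sum]
        congr 1
        rw [Finset.sum_add_distrib, ← Finset.mul_sum, ← Finset.mul_sum, hsumX, hsumXg]
        ring
      simp only [h2]
      rw [← Finset.mul_sum]
      congr 1
      rw [Finset.sum_add_distrib, hsumXg, ← Finset.sum_mul, hsumX]
      ring
    calc |∑ p ∈ S, ∑ q ∈ T, X p.1 p.2 * X q.1 q.2 * (β p.1 q.1 - β p.2 q.2)|
        ≤ ∑ p ∈ S, ∑ q ∈ T, |X p.1 p.2 * X q.1 q.2 * (β p.1 q.1 - β p.2 q.2)| := step1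
      _ ≤ ∑ p : Fin n × Fin n, ∑ q : Fin n × Fin n,
            |X p.1 p.2 * X q.1 q.2 * (β p.1 q.1 - β p.2 q.2)| := step2
      _ ≤ ∑ p : Fin n × Fin n, ∑ q : Fin n × Fin n,
            X p.1 p.2 * X q.1 q.2 * (b - a) * (g p + g q) :=
          Finset.sum_le_sum fun p _ => Finset.sum_le_sum fun q _ => step3 p q
      _ = (b - a) * (2 * D) := step4
  -- conclude
  have hOD : overlayDist β β X ≤ (b - a) * (2 * D) := by
    apply ciSup_le
    intro S
    apply ciSup_le
    intro T
    exact key S T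
  have hmem : overlayDist β β X ∈ {r : ℝ | ∃ Y : Fin n → Fin n → ℝ,
      IsCoupling α α' Y ∧ r = overlayDist β β Y} :=
    ⟨X, ⟨hXnn, hXrow, hXcol⟩, rfl⟩
  have hbdd : BddBelow {r : ℝ | ∃ Y : Fin n → Fin n → ℝ,
      IsCoupling α α' Y ∧ r = overlayDist β β Y} := by
    refine ⟨0, fun r hr => ?_⟩
    obtain ⟨Y, hY, rfl⟩ := hr
    unfold overlayDist
    have h0 : (0:ℝ) ≤ ⨆ T : Finset (Fin n × Fin n),
        |∑ p ∈ (∅ : Finset (Fin n × Fin n)), ∑ q ∈ T,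
          Y p.1 p.2 * Y q.1 q.2 * (β p.1 q.1 - β p.2 q.2)| := by
      have := le_ciSup (f := fun T : Finset (Fin n × Fin n) =>
        |∑ p ∈ (∅ : Finset (Fin n × Fin n)), ∑ q ∈ T,
          Y p.1 p.2 * Y q.1 q.2 * (β p.1 q.1 - β p.2 q.2)|)
        (Set.Finite.bddAbove (Set.finite_range _)) ∅
      simpa using le_trans (abs_nonneg _) this
    exact le_trans h0 (le_ciSup (f := fun S : Finset (Fin n × Fin n) =>
      ⨆ T : Finset (Fin n × Fin n), |∑ p ∈ S, ∑ q ∈ T,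
        Y p.1 p.2 * Y q.1 q.2 * (β p.1 q.1 - β p.2 q.2)|)
      (Set.Finite.bddAbove (Set.finite_range _)) ∅)
  calc deltaCut α β α' β ≤ overlayDist β β X := csInf_le hbdd hmem
    _ ≤ (b - a) * (2 * D) := hOD
    _ = (b - a) * ∑ i, |α i - α' i| := by rw [habs]
end

section
/- Let G₁ and G₂ be weighted graphs on n nodes each, with node weights 1/n (total weight 1) and arbitrary real edge weights. Then δ̂_□(G₁, G₂) ≤ n⁶ · δ_□(G₁, G₂), where δ̂_□ is the minimum labeled cut distance over bijections between the vertex sets and δ_□ is the cut distance over fractional overlays. -/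
/-- `δ̂_□(G₁,G₂)`: the minimum of the labeled cut distance over all bijections
(overlays) between the two vertex sets. -/
noncomputable def deltaHat (n : ℕ) (β₁ β₂ : Fin n → Fin n → ℝ) : ℝ :=
  ⨅ π : Equiv.Perm (Fin n), dcut n β₁ (fun i j => β₂ (π i) (π j))

lemma overlayDist_nonneg {n n' : ℕ} (β : Fin n → Fin n → ℝ)
    (β' : Fin n' → Fin n' → ℝ) (X : Fin n → Fin n' → ℝ) :
    0 ≤ overlayDist β β' X :=
  Real.iSup_nonneg fun _ => Real.iSup_nonneg fun _ => abs_nonneg _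

lemma dcut_nonneg (n : ℕ) (A B : Fin n → Fin n → ℝ) : 0 ≤ dcut n A B :=
  Real.iSup_nonneg fun _ => Real.iSup_nonneg fun _ => by positivity

/-- From a coupling of two uniform distributions on `[n]` we can extract a
permutation all of whose entries are at least `1/n³`. -/
lemma exists_perm_large_entries (n : ℕ) (hn : 0 < n) (X : Fin n → Fin n → ℝ)
    (hX : IsCoupling (fun _ => (1 : ℝ) / n) (fun _ => (1 : ℝ) / n) X) :
    ∃ π : Equiv.Perm (Fin n), ∀ i, 1 / (n : ℝ) ^ 3 ≤ X i (π i) := by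
  classical
  obtain ⟨hX0, hXr, hXc⟩ := hX
  have hnR : (0 : ℝ) < n := by exact_mod_cast hn
  set t : Fin n → Finset (Fin n) :=
    fun i => Finset.univ.filter (fun u => 1 / (n : ℝ) ^ 3 ≤ X i u) with ht
  have hall : ∀ A : Finset (Fin n), A.card ≤ (A.biUnion t).card := by
    intro A
    set B := A.biUnion t with hB
    by_cases hA : A.Nonempty
    · by_cases hBc : B = Finset.univ
      · calc A.card ≤ n := by simpa using A.card_le_univ
          _ = B.card := by simp [hBc]
      · have hBc' : (Finset.univ \ B).Nonempty := by
          rw [Finset.sdiff_nonempty]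
          exact fun h => hBc (Finset.univ_subset_iff.mp h)
        -- mass of rows in A
        have hmass : ∑ i ∈ A, ∑ u, X i u = A.card / n := by
          simp only [hXr]
          rw [Finset.sum_const, nsmul_eq_mul]
          ring
        have hsplit : ∀ i, (∑ u, X i u) =
            ∑ u ∈ B, X i u + ∑ u ∈ Finset.univ \ B, X i u := by
          intro i
          rw [← Finset.sum_sdiff (Finset.subset_univ B)]
          ring
        have h1 : ∑ i ∈ A, ∑ u ∈ B, X i u ≤ (B.card : ℝ) / n := by
          calc ∑ i ∈ A, ∑ u ∈ B, X i u ≤ ∑ i, ∑ u ∈ B, X i u := by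
                apply Finset.sum_le_sum_of_subset_of_nonneg (Finset.subset_univ A)
                intro i _ _
                exact Finset.sum_nonneg fun u _ => hX0 i u
            _ = ∑ u ∈ B, ∑ i, X i u := Finset.sum_comm
            _ = (B.card : ℝ) / n := by
                simp only [hXc]
                rw [Finset.sum_const, nsmul_eq_mul]
                ring
        have h2 : ∑ i ∈ A, ∑ u ∈ Finset.univ \ B, X i u
            < (A.card : ℝ) * ((Finset.univ \ B).card) * (1 / (n : ℝ) ^ 3) := by
          have hlt : ∀ i ∈ A, ∀ u ∈ Finset.univ \ B, X i u < 1 / (n : ℝ) ^ 3 := by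
            intro i hi u hu
            by_contra hge
            push_neg at hge
            have : u ∈ B := Finset.mem_biUnion.mpr
              ⟨i, hi, Finset.mem_filter.mpr ⟨Finset.mem_univ u, hge⟩⟩
            simp [Finset.mem_sdiff] at hu
            exact hu this
          have := Finset.sum_lt_sum_of_nonempty
            (s := A ×ˢ (Finset.univ \ B)) (hA.product hBc')
            (f := fun p => X p.1 p.2) (g := fun _ => 1 / (n : ℝ) ^ 3)
            (fun p hp => by
              rw [Finset.mem_product] at hp
              exact hlt p.1 hp.1 p.2 hp.2)
          calc ∑ i ∈ A, ∑ u ∈ Finset.univ \ B, X i u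
              = ∑ p ∈ A ×ˢ (Finset.univ \ B), X p.1 p.2 := by
                rw [Finset.sum_product]
            _ < ∑ _p ∈ A ×ˢ (Finset.univ \ B), 1 / (n : ℝ) ^ 3 := this
            _ = (A.card : ℝ) * ((Finset.univ \ B).card) * (1 / (n : ℝ) ^ 3) := by
                rw [Finset.sum_const, Finset.card_product]
                push_cast
                ring
        have hA_le : (A.card : ℝ) ≤ n := by exact_mod_cast A.card_le_univ.trans (by simp)
        have hBc_le : (((Finset.univ \ B).card : ℝ)) ≤ n := by
          exact_mod_cast (Finset.univ \ B).card_le_univ.trans (by simp)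
        have key : (A.card : ℝ) / n < (B.card : ℝ) / n + 1 / n := by
          have h3 : (A.card : ℝ) * ((Finset.univ \ B).card) * (1 / (n : ℝ) ^ 3)
              ≤ 1 / n := by
            have hm : (A.card : ℝ) * ((Finset.univ \ B).card) ≤ (n : ℝ) * n :=
              mul_le_mul hA_le hBc_le (by positivity) hnR.le
            calc (A.card : ℝ) * ((Finset.univ \ B).card) * (1 / (n : ℝ) ^ 3)
                ≤ (n : ℝ) * n * (1 / (n : ℝ) ^ 3) :=
                  mul_le_mul_of_nonneg_right hm (by positivity)
              _ = 1 / n := by field_simp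
          calc (A.card : ℝ) / n = ∑ i ∈ A, ∑ u, X i u := hmass.symm
            _ = ∑ i ∈ A, ∑ u ∈ B, X i u + ∑ i ∈ A, ∑ u ∈ Finset.univ \ B, X i u := by
                rw [← Finset.sum_add_distrib]
                exact Finset.sum_congr rfl fun i _ => hsplit i
            _ < (B.card : ℝ) / n + 1 / n := by
                have := lt_of_lt_of_le h2 h3
                linarith
        have : (A.card : ℝ) < (B.card : ℝ) + 1 := by
          rw [← add_div, div_lt_div_iff_of_pos_right hnR] at key
          nlinarith
        exact_mod_cast Nat.lt_add_one_iff.mp (by exact_mod_cast this)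
    · simp [Finset.not_nonempty_iff_eq_empty.mp hA]
  obtain ⟨f, hfinj, hf⟩ := (Finset.all_card_le_biUnion_card_iff_exists_injective t).mp hall
  refine ⟨Equiv.ofBijective f ((Finite.injective_iff_bijective).mp hfinj), fun i => ?_⟩
  have := hf i
  simp only [ht, Finset.mem_filter] at this
  exact this.2

/-- For weighted graphs `G₁, G₂` on `n` nodes with node weights `1/n`,
`δ̂_□(G₁,G₂) ≤ n⁶ · δ_□(G₁,G₂)`. -/
theorem deltaHat_le_pow_six_deltaCut (n : ℕ) (hn : 0 < n)
    (β₁ β₂ : Fin n → Fin n → ℝ)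
    (hβ₁ : ∀ i j, β₁ i j = β₁ j i) (hβ₂ : ∀ i j, β₂ i j = β₂ j i) :
    deltaHat n β₁ β₂ ≤
      (n : ℝ) ^ 6 *
        deltaCut (fun _ => (1 : ℝ) / n) β₁ (fun _ => (1 : ℝ) / n) β₂ := by
  classical
  have hnR : (0 : ℝ) < n := by exact_mod_cast hn
  set Sset := {r : ℝ | ∃ X : Fin n → Fin n → ℝ,
    IsCoupling (fun _ => (1 : ℝ) / n) (fun _ => (1 : ℝ) / n) X ∧
    r = overlayDist β₁ β₂ X} with hSset
  have hne : Sset.Nonempty := by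
    refine ⟨overlayDist β₁ β₂ (fun _ _ => 1 / (n : ℝ) ^ 2),
      fun _ _ => 1 / (n : ℝ) ^ 2, ⟨fun i u => by positivity, fun i => ?_, fun u => ?_⟩, rfl⟩
    · simp [Finset.sum_const]
      field_simp
    · simp [Finset.sum_const]
      field_simp
  have key : ∀ r ∈ Sset, deltaHat n β₁ β₂ ≤ (n : ℝ) ^ 6 * r := by
    rintro r ⟨X, hX, rfl⟩
    obtain ⟨π, hπ⟩ := exists_perm_large_entries n hn X hX
    have hX0 := hX.1
    have hov := overlayDist_nonneg β₁ β₂ X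
    -- pointwise bound
    have hpt : ∀ i j, |β₁ i j - β₂ (π i) (π j)| ≤ (n : ℝ) ^ 6 * overlayDist β₁ β₂ X := by
      intro i j
      have hsingle : X i (π i) * X j (π j) * |β₁ i j - β₂ (π i) (π j)|
          ≤ overlayDist β₁ β₂ X := by
        have h1 : |∑ p ∈ ({(i, π i)} : Finset (Fin n × Fin n)),
            ∑ q ∈ ({(j, π j)} : Finset (Fin n × Fin n)),
            X p.1 p.2 * X q.1 q.2 * (β₁ p.1 q.1 - β₂ p.2 q.2)|
            ≤ ⨆ T : Finset (Fin n × Fin n),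
              |∑ p ∈ ({(i, π i)} : Finset (Fin n × Fin n)), ∑ q ∈ T,
                X p.1 p.2 * X q.1 q.2 * (β₁ p.1 q.1 - β₂ p.2 q.2)| :=
          le_ciSup (f := fun T : Finset (Fin n × Fin n) =>
            |∑ p ∈ ({(i, π i)} : Finset (Fin n × Fin n)), ∑ q ∈ T,
              X p.1 p.2 * X q.1 q.2 * (β₁ p.1 q.1 - β₂ p.2 q.2)|)
            (Set.Finite.bddAbove (Set.finite_range _)) _
        have h2 : (⨆ T : Finset (Fin n × Fin n),
              |∑ p ∈ ({(i, π i)} : Finset (Fin n × Fin n)), ∑ q ∈ T,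
                X p.1 p.2 * X q.1 q.2 * (β₁ p.1 q.1 - β₂ p.2 q.2)|)
            ≤ overlayDist β₁ β₂ X :=
          le_ciSup (f := fun S : Finset (Fin n × Fin n) =>
            ⨆ T : Finset (Fin n × Fin n), |∑ p ∈ S, ∑ q ∈ T,
              X p.1 p.2 * X q.1 q.2 * (β₁ p.1 q.1 - β₂ p.2 q.2)|)
            (Set.Finite.bddAbove (Set.finite_range _)) _
        refine le_trans (le_of_eq ?_) (h1.trans h2)
        rw [Finset.sum_singleton, Finset.sum_singleton, abs_mul, abs_mul,
          abs_of_nonneg (hX0 i (π i)), abs_of_nonneg (hX0 j (π j))]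
      have hi := hπ i
      have hj := hπ j
      have hab : (0:ℝ) ≤ |β₁ i j - β₂ (π i) (π j)| := abs_nonneg _
      have hn3 : (0:ℝ) < (n:ℝ)^3 := by positivity
      have h1 : 1 ≤ (n:ℝ)^3 * X i (π i) := by
        rw [div_le_iff₀ hn3] at hi; linarith [hi]
      have h2 : 1 ≤ (n:ℝ)^3 * X j (π j) := by
        rw [div_le_iff₀ hn3] at hj; linarith [hj]
      calc |β₁ i j - β₂ (π i) (π j)|
          = 1 * 1 * |β₁ i j - β₂ (π i) (π j)| := by ring
        _ ≤ ((n:ℝ)^3 * X i (π i)) * ((n:ℝ)^3 * X j (π j)) * |β₁ i j - β₂ (π i) (π j)| := by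
            apply mul_le_mul_of_nonneg_right _ hab
            exact mul_le_mul h1 h2 zero_le_one (by positivity)
        _ = (n:ℝ)^6 * (X i (π i) * X j (π j) * |β₁ i j - β₂ (π i) (π j)|) := by ring
        _ ≤ (n:ℝ)^6 * overlayDist β₁ β₂ X := by
            apply mul_le_mul_of_nonneg_left hsingle (by positivity)
    have h1 : deltaHat n β₁ β₂ ≤ dcut n β₁ (fun i j => β₂ (π i) (π j)) := by
      apply ciInf_le _ π
      refine ⟨0, ?_⟩
      rintro _ ⟨π', rfl⟩
      exact dcut_nonneg _ _ _
    refine h1.trans ?_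
    apply ciSup_le
    intro S
    apply ciSup_le
    intro T
    rw [div_le_iff₀ (by positivity)]
    calc |∑ i ∈ S, ∑ j ∈ T, (β₁ i j - β₂ (π i) (π j))|
        ≤ ∑ i ∈ S, ∑ j ∈ T, |β₁ i j - β₂ (π i) (π j)| := by
          refine (Finset.abs_sum_le_sum_abs _ _).trans ?_
          exact Finset.sum_le_sum fun i _ => Finset.abs_sum_le_sum_abs _ _
      _ ≤ ∑ i ∈ S, ∑ j ∈ T, (n : ℝ) ^ 6 * overlayDist β₁ β₂ X :=
          Finset.sum_le_sum fun i _ => Finset.sum_le_sum fun j _ => hpt i j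
      _ = (S.card : ℝ) * T.card * ((n : ℝ) ^ 6 * overlayDist β₁ β₂ X) := by
          simp [Finset.sum_const]
          ring
      _ ≤ (n : ℝ) * n * ((n : ℝ) ^ 6 * overlayDist β₁ β₂ X) := by
          apply mul_le_mul_of_nonneg_right _ (by positivity)
          have hS : (S.card : ℝ) ≤ n := by exact_mod_cast S.card_le_univ.trans (by simp)
          have hT : (T.card : ℝ) ≤ n := by exact_mod_cast T.card_le_univ.trans (by simp)
          exact mul_le_mul hS hT (by positivity) hnR.le
      _ = (n : ℝ) ^ 6 * overlayDist β₁ β₂ X * (n : ℝ) ^ 2 := by ring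
  have hInf : deltaHat n β₁ β₂ / (n : ℝ) ^ 6 ≤ sInf Sset := by
    apply le_csInf hne
    intro r hr
    rw [div_le_iff₀ (by positivity)]
    calc deltaHat n β₁ β₂ ≤ (n : ℝ) ^ 6 * r := key r hr
      _ = r * (n : ℝ) ^ 6 := by ring
  rw [deltaCut, ← hSset]
  calc deltaHat n β₁ β₂ = (n : ℝ) ^ 6 * (deltaHat n β₁ β₂ / (n : ℝ) ^ 6) := by
        field_simp
    _ ≤ (n : ℝ) ^ 6 * sInf Sset := by
        apply mul_le_mul_of_nonneg_left hInf (by positivity)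
end
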